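/- arXiv:2206.10991 — 8 statements merged into one kernel-verified Lean document; each statement's English description precedes it below -/
import Mathlib

section
/- The linear message-passing ODE vec(Ḟ(t)) = −(Ω ⊗ I_n) vec(F(t)) + (W ⊗ Ā) vec(F(t)) − (W̃ ⊗ I_n) vec(F(0)) is the gradient flow (up to factor 2) of the energy E_θ(F) = ⟨vec(F), (Ω ⊗ I_n − W ⊗ Ā) vec(F) + 2(W̃ ⊗ I_n) vec(F(0))⟩ if and only if both Ω and W are symmetric, provided Ā has at least one off-diagonal nonzero entry. -/
open Matrix Kronecker

/-- The linear message-passing ODE with coefficient matrix −(Ω ⊗ I_n − W ⊗ Ā)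
is a gradient flow of the energy E_θ (equivalently, the matrix Ω ⊗ I_n − W ⊗ Ā
is symmetric) if and only if both Ω and W are symmetric, provided the symmetric
matrix Ā has a nonzero off-diagonal entry. -/
theorem gradient_flow_iff_symmetric (n d : ℕ)
    (Abar : Matrix (Fin n) (Fin n) ℝ) (hA : Abar.IsSymm)
    (i0 j0 : Fin n) (hij : i0 ≠ j0) (hne : Abar i0 j0 ≠ 0)
    (Ω W : Matrix (Fin d) (Fin d) ℝ) :
    ((Ω ⊗ₖ (1 : Matrix (Fin n) (Fin n) ℝ)) - (W ⊗ₖ Abar)).IsSymm ↔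
      Ω.IsSymm ∧ W.IsSymm := by
  constructor
  · intro h
    have hE : ∀ (a b : Fin d) (i j : Fin n),
        Ω b a * (1 : Matrix (Fin n) (Fin n) ℝ) j i - W b a * Abar j i =
        Ω a b * (1 : Matrix (Fin n) (Fin n) ℝ) i j - W a b * Abar i j := by
      intro a b i j
      have := congrFun (congrFun h (a, i)) (b, j)
      simpa [Matrix.transpose_apply, Matrix.sub_apply, Matrix.kroneckerMap_apply]
        using this
    have hAji : Abar j0 i0 = Abar i0 j0 := by
      have := congrFun (congrFun hA i0) j0
      simpa [Matrix.transpose_apply] using this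
    have hW : W.IsSymm := by
      ext a b
      have := hE b a i0 j0
      simp [Matrix.one_apply, hij, hij.symm, hAji] at this
      rcases this with h | h
      · simpa [Matrix.transpose_apply] using h.symm
      · exact absurd h hne
    have hΩ : Ω.IsSymm := by
      ext a b
      have := hE b a i0 i0
      have hw : W a b = W b a := by
        have := congrFun (congrFun hW b) a
        simpa [Matrix.transpose_apply] using this
      simp [Matrix.one_apply, hw] at this
      simpa [Matrix.transpose_apply] using this.symm
    exact ⟨hΩ, hW⟩
  · rintro ⟨hΩ, hW⟩
    ext ⟨a, i⟩ ⟨b, j⟩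
    have h1 : Ω b a = Ω a b := by
      have := congrFun (congrFun hΩ a) b; simpa using this
    have h2 : W b a = W a b := by
      have := congrFun (congrFun hW a) b; simpa using this
    have h3 : Abar j i = Abar i j := by
      have := congrFun (congrFun hA i) j; simpa using this
    simp [Matrix.transpose_apply, Matrix.sub_apply, Matrix.kroneckerMap_apply,
      h1, h2, h3, Matrix.one_apply, eq_comm]
end

section
/- For a symmetric matrix W decomposed as W = Θ₊ᵀΘ₊ − Θ₋ᵀΘ₋ (positive and negative spectral parts), the energy E_θ(F) = Σ_i ⟨f_i, Ω f_i⟩ − Σ_{i,j} Ā_{ij} ⟨f_i, W f_j⟩ with Ā = D^{−1/2}AD^{−1/2} decomposes as E_θ(F) = Σ_i ⟨f_i, (Ω − W) f_i⟩ + (1/2) Σ_{i,j} ‖Θ₊(∇F)_{ij}‖² − (1/2) Σ_{i,j} ‖Θ₋(∇F)_{ij}‖², where (∇F)_{ij} = f_j/√d_j − f_i/√d_i and sums over (i,j) run over ordered pairs with A_{ij}=1. -/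
open Matrix Finset

lemma quad_eq {d n : ℕ} (Θ : Matrix (Fin d) (Fin d) ℝ)
    (F : Matrix (Fin n) (Fin d) ℝ) (i j : Fin n) :
    ∑ a, ∑ b, F i a * (Θᵀ * Θ) a b * F j b
      = ∑ c, (∑ b, Θ c b * F i b) * (∑ b, Θ c b * F j b) := by
  calc ∑ a, ∑ b, F i a * (Θᵀ * Θ) a b * F j b
      = ∑ a, ∑ b, ∑ c, F i a * (Θ c a * Θ c b) * F j b := by
        simp [Matrix.mul_apply, Matrix.transpose_apply, Finset.sum_mul, Finset.mul_sum]
    _ = ∑ a, ∑ c, ∑ b, F i a * (Θ c a * Θ c b) * F j b :=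
        Finset.sum_congr rfl fun a _ => Finset.sum_comm
    _ = ∑ c, ∑ a, ∑ b, F i a * (Θ c a * Θ c b) * F j b := Finset.sum_comm
    _ = ∑ c, (∑ b, Θ c b * F i b) * (∑ b, Θ c b * F j b) := by
        apply Finset.sum_congr rfl; intro c _
        rw [Finset.sum_mul_sum]
        apply Finset.sum_congr rfl; intro a _
        apply Finset.sum_congr rfl; intro b _
        ring

lemma key {n d : ℕ} (G : SimpleGraph (Fin n)) [DecidableRel G.Adj]
    (deg : Fin n → ℝ) (hdeg : ∀ i, deg i = ∑ j, G.adjMatrix ℝ i j)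
    (hpos : ∀ i, 0 < deg i)
    (Θ : Matrix (Fin d) (Fin d) ℝ) (F : Matrix (Fin n) (Fin d) ℝ) :
    (1/2 : ℝ) * (∑ i, ∑ j, G.adjMatrix ℝ i j *
        ∑ a, (∑ b, Θ a b * (F j b / Real.sqrt (deg j) - F i b / Real.sqrt (deg i))) ^ 2)
    = (∑ i, ∑ a, ∑ b, F i a * (Θᵀ * Θ) a b * F i b)
      - ∑ i, ∑ j, (G.adjMatrix ℝ i j / (Real.sqrt (deg i) * Real.sqrt (deg j))) *
          ∑ a, ∑ b, F i a * (Θᵀ * Θ) a b * F j b := by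
  set s : Fin n → ℝ := fun i => Real.sqrt (deg i) with hs
  have hsp : ∀ i, 0 < s i := fun i => Real.sqrt_pos.2 (hpos i)
  have hss : ∀ i, s i * s i = deg i := fun i => Real.mul_self_sqrt (hpos i).le
  set P : Fin n → Fin d → ℝ := fun i a => ∑ b, Θ a b * F i b with hP
  set Q : Fin n → ℝ := fun i => ∑ a, (P i a)^2 with hQ
  set C : Fin n → Fin n → ℝ := fun i j => ∑ a, P i a * P j a with hC
  have h1 : ∀ i j a, (∑ b, Θ a b * (F j b / s j - F i b / s i)) = P j a / s j - P i a / s i := by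
    intro i j a
    simp only [hP, mul_sub, Finset.sum_sub_distrib, ← mul_div_assoc, ← Finset.sum_div]
  have h2 : ∀ i j, (∑ a, (P j a / s j - P i a / s i)^2)
      = Q j / deg j + Q i / deg i - 2*(C i j / (s i * s j)) := by
    intro i j
    have hpt : ∀ a, (P j a / s j - P i a / s i)^2
        = (P j a)^2/deg j + (P i a)^2/deg i - 2*((P i a * P j a)/(s i * s j)) := by
      intro a
      rw [← hss i, ← hss j]
      field_simp
      ring
    simp only [hpt, Finset.sum_add_distrib, Finset.sum_sub_distrib, ← Finset.sum_div,
      ← Finset.mul_sum, hQ, hC]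
  have hA : ∀ i j, G.adjMatrix ℝ i j = G.adjMatrix ℝ j i := by
    intro i j; simp [SimpleGraph.adjMatrix_apply, SimpleGraph.adj_comm]
  have hrow : ∀ i (x : ℝ), ∑ j, G.adjMatrix ℝ i j * x = deg i * x := by
    intro i x
    rw [← Finset.sum_mul]
    rw [← hdeg i]
  have hquadW : ∀ i j, (∑ a, ∑ b, F i a * (Θᵀ * Θ) a b * F j b) = C i j := by
    intro i j; rw [quad_eq]
  calc (1/2 : ℝ) * (∑ i, ∑ j, G.adjMatrix ℝ i j *
        ∑ a, (∑ b, Θ a b * (F j b / s j - F i b / s i)) ^ 2)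
      = (1/2 : ℝ) * (∑ i, ∑ j, G.adjMatrix ℝ i j *
          (Q j / deg j + Q i / deg i - 2*(C i j / (s i * s j)))) := by
        congr 1
        apply Finset.sum_congr rfl; intro i _
        apply Finset.sum_congr rfl; intro j _
        rw [show (∑ a, (∑ b, Θ a b * (F j b / s j - F i b / s i)) ^ 2)
            = ∑ a, (P j a / s j - P i a / s i)^2 from
          Finset.sum_congr rfl fun a _ => by rw [h1], h2]
    _ = (1/2 : ℝ) * ((∑ i, ∑ j, G.adjMatrix ℝ i j * (Q j / deg j))
          + (∑ i, ∑ j, G.adjMatrix ℝ i j * (Q i / deg i))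
          - (∑ i, ∑ j, G.adjMatrix ℝ i j * (2*(C i j / (s i * s j))))) := by
        simp only [mul_add, mul_sub, Finset.sum_add_distrib, Finset.sum_sub_distrib]
    _ = (1/2 : ℝ) * ((∑ i, Q i) + (∑ i, Q i)
          - 2 * (∑ i, ∑ j, (G.adjMatrix ℝ i j / (s i * s j)) * C i j)) := by
        congr 2
        · congr 1
          · rw [Finset.sum_comm]
            apply Finset.sum_congr rfl; intro j _
            rw [Finset.sum_congr rfl fun i _ => by rw [hA i j], hrow j]
            field_simp [(hpos j).ne']
          · apply Finset.sum_congr rfl; intro i _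
            rw [hrow i]
            field_simp [(hpos i).ne']
        · rw [Finset.mul_sum]
          apply Finset.sum_congr rfl; intro i _
          rw [Finset.mul_sum]
          apply Finset.sum_congr rfl; intro j _
          ring
    _ = (∑ i, Q i) - ∑ i, ∑ j, (G.adjMatrix ℝ i j / (s i * s j)) * C i j := by ring
    _ = (∑ i, ∑ a, ∑ b, F i a * (Θᵀ * Θ) a b * F i b)
      - ∑ i, ∑ j, (G.adjMatrix ℝ i j / (s i * s j)) *
          ∑ a, ∑ b, F i a * (Θᵀ * Θ) a b * F j b := by
        congr 1
        · apply Finset.sum_congr rfl; intro i _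
          rw [hquadW i i, hC, hQ]
          exact Finset.sum_congr rfl fun a _ => (sq (P i a)) ▸ (pow_two (P i a))
        · apply Finset.sum_congr rfl; intro i _
          apply Finset.sum_congr rfl; intro j _
          rw [hquadW i j]

/-- Energy decomposition: for symmetric W = Θ₊ᵀΘ₊ − Θ₋ᵀΘ₋,
E_θ(F) = Σ_i ⟨f_i, Ω f_i⟩ − Σ_{i,j} Ā_{ij} ⟨f_i, W f_j⟩
       = Σ_i ⟨f_i, (Ω−W) f_i⟩ + (1/2) Σ_{i,j} ‖Θ₊(∇F)_{ij}‖² − (1/2) Σ_{i,j} ‖Θ₋(∇F)_{ij}‖²,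
with (∇F)_{ij} = f_j/√d_j − f_i/√d_i and sums over ordered adjacent pairs. -/
theorem energy_attraction_repulsion_decomposition (n d : ℕ)
    (G : SimpleGraph (Fin n)) [DecidableRel G.Adj]
    (deg : Fin n → ℝ) (hdeg : ∀ i, deg i = ∑ j, G.adjMatrix ℝ i j)
    (hpos : ∀ i, 0 < deg i)
    (W Ω Θp Θm : Matrix (Fin d) (Fin d) ℝ) (hW : W.IsSymm)
    (hdecomp : W = Θpᵀ * Θp - Θmᵀ * Θm)
    (F : Matrix (Fin n) (Fin d) ℝ) :
    (∑ i, ∑ a, ∑ b, F i a * Ω a b * F i b)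
      - (∑ i, ∑ j, (G.adjMatrix ℝ i j / (Real.sqrt (deg i) * Real.sqrt (deg j))) *
          ∑ a, ∑ b, F i a * W a b * F j b)
    = (∑ i, ∑ a, ∑ b, F i a * (Ω - W) a b * F i b)
      + (1 / 2 : ℝ) * (∑ i, ∑ j, G.adjMatrix ℝ i j *
          ∑ a, (∑ b, Θp a b * (F j b / Real.sqrt (deg j) - F i b / Real.sqrt (deg i))) ^ 2)
      - (1 / 2 : ℝ) * (∑ i, ∑ j, G.adjMatrix ℝ i j *
          ∑ a, (∑ b, Θm a b * (F j b / Real.sqrt (deg j) - F i b / Real.sqrt (deg i))) ^ 2) := by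
  rw [key G deg hdeg hpos Θp F, key G deg hdeg hpos Θm F]
  have hW' : ∀ i j, (∑ a, ∑ b, F i a * W a b * F j b)
      = (∑ a, ∑ b, F i a * (Θpᵀ * Θp) a b * F j b)
        - (∑ a, ∑ b, F i a * (Θmᵀ * Θm) a b * F j b) := by
    intro i j
    rw [hdecomp]
    simp [Matrix.sub_apply, sub_mul, mul_sub, Finset.sum_sub_distrib]
  have hΩ' : ∀ i, (∑ a, ∑ b, F i a * (Ω - W) a b * F i b)
      = (∑ a, ∑ b, F i a * Ω a b * F i b) - (∑ a, ∑ b, F i a * W a b * F i b) := by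
    intro i
    simp [Matrix.sub_apply, sub_mul, mul_sub, Finset.sum_sub_distrib]
  simp only [hΩ', hW', mul_sub, Finset.sum_sub_distrib]
  ring
end

section
/- Consider the update vec(F(t+τ)) = (I + τ W ⊗ Ā)vec(F(t)) with W symmetric with eigenvalues μ_0 < μ_1 ≤ … ≤ μ_{d−1} (μ_0 simple) and Ā = I − Δ. If μ_{d−1}/(λ_{n−1} − 1) < |μ_0| < 2/(τ(2 − λ_{n−1})), then there exists δ < 1 such that vec(F(mτ)) = (1 + τ|μ_0|(λ_{n−1} − 1))^m ( c_{0,n−1}(0) ψ_0 ⊗ φ_{n−1} + O(δ^m) ), i.e. the component along ψ_0 ⊗ φ_{n−1} (highest graph frequency, most negative channel eigenvalue) dominates exponentially. -/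
open Matrix Kronecker Finset

private lemma aux_dot_tensor {n d : ℕ} (x x' : Fin d → ℝ) (y y' : Fin n → ℝ) :
    ((fun p : Fin d × Fin n => x p.1 * y p.2) ⬝ᵥ fun p => x' p.1 * y' p.2) =
      (x ⬝ᵥ x') * (y ⬝ᵥ y') := by
  simp only [dotProduct, Fintype.sum_prod_type]
  rw [Finset.sum_mul_sum]
  apply Finset.sum_congr rfl; intros; apply Finset.sum_congr rfl; intros; ring

private lemma aux_kron_mulVec {n d : ℕ} (A : Matrix (Fin d) (Fin d) ℝ)
    (B : Matrix (Fin n) (Fin n) ℝ) (x : Fin d → ℝ) (y : Fin n → ℝ) :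
    (A ⊗ₖ B).mulVec (fun p : Fin d × Fin n => x p.1 * y p.2) =
      fun p => A.mulVec x p.1 * B.mulVec y p.2 := by
  funext p
  simp only [mulVec, dotProduct, Fintype.sum_prod_type, kroneckerMap_apply]
  rw [Finset.sum_mul_sum]
  apply Finset.sum_congr rfl; intros; apply Finset.sum_congr rfl; intros; ring

private lemma aux_complete {ι : Type*} [Fintype ι] [DecidableEq ι] (E : ι → ι → ℝ)
    (hEON : ∀ q q', E q ⬝ᵥ E q' = if q = q' then (1:ℝ) else 0) (v : ι → ℝ) :
    (∑ q, (v ⬝ᵥ E q) • E q) = v := by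
  let U : Matrix ι ι ℝ := Matrix.of E
  have hU1 : U * Uᵀ = 1 := by
    ext q q'
    simpa [Matrix.mul_apply, Matrix.one_apply, dotProduct, U] using hEON q q'
  have hUU : Uᵀ * U = 1 := mul_eq_one_comm.mp hU1
  funext p
  have key : ∀ p', (∑ q, E q p' * E q p) = if p' = p then (1:ℝ) else 0 := by
    intro p'
    have h := congrFun (congrFun hUU p') p
    simpa [Matrix.mul_apply, Matrix.transpose_apply, Matrix.one_apply, U] using h
  have h2 : (∑ q, (v ⬝ᵥ E q) • E q) p = ∑ p', v p' * ∑ q, E q p' * E q p := by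
    simp only [Finset.sum_apply, Pi.smul_apply, smul_eq_mul, dotProduct,
      Finset.sum_mul, Finset.mul_sum]
    rw [Finset.sum_comm]
    apply Finset.sum_congr rfl; intros; apply Finset.sum_congr rfl; intros; ring
  rw [h2]
  simp [key]

/-- Over-sharpening (HFD) regime: for the residual update
vec(F(t+τ)) = (I + τ W ⊗ Ā)vec(F(t)) with Ā = I − Δ, if
μ_{d−1}/(λ_{n−1}−1) < |μ_0| < 2/(τ(2−λ_{n−1})), then there exists δ < 1 such that
vec(F(mτ)) = (1 + τ|μ_0|(λ_{n−1}−1))^m ( c_{0,n−1}(0) ψ_0 ⊗ φ_{n−1} + O(δ^m) ). -/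
theorem oversharpening_HFD (n d : ℕ)
    (Δ : Matrix (Fin n) (Fin n) ℝ) (W : Matrix (Fin d) (Fin d) ℝ) (hW : W.IsSymm)
    (τ : ℝ) (hτ : 0 < τ)
    (φ : Fin n → Fin n → ℝ) (lam : Fin n → ℝ)
    (hφON : ∀ k l, φ k ⬝ᵥ φ l = if k = l then (1 : ℝ) else 0)
    (hφ : ∀ l, Δ.mulVec (φ l) = lam l • φ l)
    (ψ : Fin d → Fin d → ℝ) (mu : Fin d → ℝ)
    (hψON : ∀ r s, ψ r ⬝ᵥ ψ s = if r = s then (1 : ℝ) else 0)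
    (hψ : ∀ r, W.mulVec (ψ r) = mu r • ψ r)
    -- the graph spectrum: eigenvalues in [0, λ_{n−1}], 1 < λ_{n−1} < 2 (connected,
    -- non-bipartite), largest eigenvalue simple
    (lmax : Fin n) (hlmax : ∀ l, lam l ≤ lam lmax)
    (hlmaxSimple : ∀ l, l ≠ lmax → lam l < lam lmax)
    (hlamNonneg : ∀ l, 0 ≤ lam l) (hlam1 : 1 < lam lmax) (hlam2 : lam lmax < 2)
    -- the channel-mixing spectrum: μ_0 smallest and simple, μ_{d−1} largest
    (r0 : Fin d) (hr0 : ∀ r, mu r0 ≤ mu r) (hr0Simple : ∀ r, r ≠ r0 → mu r0 < mu r)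
    (rtop : Fin d) (hrtop : ∀ r, mu r ≤ mu rtop)
    -- the assumptions: μ_{d−1}/(λ_{n−1}−1) < |μ_0| < 2/(τ(2−λ_{n−1}))
    (hcond1 : mu rtop / (lam lmax - 1) < |mu r0|)
    (hcond2 : |mu r0| < 2 / (τ * (2 - lam lmax)))
    (vecF : ℕ → Fin d × Fin n → ℝ)
    (hrec : ∀ m, vecF (m + 1) =
      vecF m + τ • (W ⊗ₖ ((1 : Matrix (Fin n) (Fin n) ℝ) - Δ)).mulVec (vecF m)) :
    ∃ δ C : ℝ, 0 ≤ δ ∧ δ < 1 ∧ 0 ≤ C ∧ ∀ m : ℕ,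
      ‖vecF m - ((1 + τ * |mu r0| * (lam lmax - 1)) ^ m *
          (vecF 0 ⬝ᵥ fun p : Fin d × Fin n => ψ r0 p.1 * φ lmax p.2)) •
            (fun p : Fin d × Fin n => ψ r0 p.1 * φ lmax p.2)‖
        ≤ (1 + τ * |mu r0| * (lam lmax - 1)) ^ m * (C * δ ^ m) := by
  classical
  -- notation
  set E : Fin d × Fin n → Fin d × Fin n → ℝ :=
    fun q p => ψ q.1 p.1 * φ q.2 p.2 with hEdef
  set a : Fin d × Fin n → ℝ := fun q => 1 + τ * (mu q.1 * (1 - lam q.2)) with hadef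
  set c : Fin d × Fin n → ℝ := fun q => vecF 0 ⬝ᵥ E q with hcdef
  set A : ℝ := 1 + τ * |mu r0| * (lam lmax - 1) with hAdef
  -- basic spectral facts
  have hlpos : 0 < lam lmax - 1 := by linarith
  have hc1' : mu rtop < |mu r0| * (lam lmax - 1) := by
    have := (div_lt_iff₀ hlpos).mp hcond1; linarith
  have hmu0neg : mu r0 < 0 := by
    by_contra h
    push_neg at h
    rw [abs_of_nonneg h] at hc1'
    nlinarith [hr0 rtop]
  have habs : |mu r0| = -mu r0 := abs_of_neg hmu0neg
  have hc2' : τ * |mu r0| * (2 - lam lmax) < 2 := by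
    have h1 : 0 < τ * (2 - lam lmax) := by nlinarith
    have := (lt_div_iff₀ h1).mp hcond2; nlinarith
  have hApos : (1:ℝ) < A := by
    rw [hAdef]
    nlinarith [mul_pos (mul_pos hτ (abs_pos.mpr hmu0neg.ne)) hlpos]
  have hA0 : (0:ℝ) < A := by linarith
  -- orthonormality of the tensor eigenvectors
  have hEON : ∀ q q', E q ⬝ᵥ E q' = if q = q' then (1:ℝ) else 0 := by
    rintro ⟨r, l⟩ ⟨r', l'⟩
    rw [hEdef]
    rw [aux_dot_tensor (ψ r) (ψ r') (φ l) (φ l'), hψON, hφON]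
    by_cases h1 : r = r' <;> by_cases h2 : l = l' <;> simp [h1, h2, Prod.ext_iff]
  -- eigenvector property
  have hME : ∀ q, (W ⊗ₖ ((1 : Matrix (Fin n) (Fin n) ℝ) - Δ)).mulVec (E q) =
      (mu q.1 * (1 - lam q.2)) • E q := by
    rintro ⟨r, l⟩
    have h1 : ((1 : Matrix (Fin n) (Fin n) ℝ) - Δ).mulVec (φ l) = (1 - lam l) • φ l := by
      rw [Matrix.sub_mulVec, Matrix.one_mulVec, hφ, sub_smul, one_smul]
    rw [hEdef]
    rw [aux_kron_mulVec W _ (ψ r) (φ l), hψ r, h1]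
    funext p
    simp only [Pi.smul_apply, smul_eq_mul]
    ring
  -- the closed-form solution
  have hform : ∀ m, vecF m = ∑ q, (c q * a q ^ m) • E q := by
    intro m
    induction m with
    | zero =>
      simp only [pow_zero, mul_one]
      exact (aux_complete E hEON (vecF 0)).symm
    | succ m ih =>
      rw [hrec m, ih]
      have hMsum : (W ⊗ₖ ((1 : Matrix (Fin n) (Fin n) ℝ) - Δ)).mulVec
          (∑ q, (c q * a q ^ m) • E q)
          = ∑ q, (c q * a q ^ m) • ((mu q.1 * (1 - lam q.2)) • E q) := by
        rw [show (W ⊗ₖ ((1 : Matrix (Fin n) (Fin n) ℝ) - Δ)).mulVec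
            (∑ q, (c q * a q ^ m) • E q)
            = (W ⊗ₖ ((1 : Matrix (Fin n) (Fin n) ℝ) - Δ)).mulVecLin
              (∑ q, (c q * a q ^ m) • E q) from rfl]
        rw [map_sum]
        apply Finset.sum_congr rfl
        intro q _
        rw [LinearMap.map_smul, Matrix.mulVecLin_apply, hME q]
      rw [hMsum, Finset.smul_sum, ← Finset.sum_add_distrib]
      apply Finset.sum_congr rfl
      intro q _
      funext p
      simp only [Pi.add_apply, Pi.smul_apply, smul_eq_mul, hadef]
      ring
  -- the dominant eigenvalue
  have haq0 : a (r0, lmax) = A := by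
    rw [hadef, hAdef]; simp only; rw [habs]; ring
  -- all other eigenvalues are strictly smaller in absolute value
  have habound : ∀ q : Fin d × Fin n, q ≠ (r0, lmax) → |a q| < A := by
    rintro ⟨r, l⟩ hq
    have hxlow : -|mu r0| ≤ mu r * (1 - lam l) := by
      rcases lt_or_ge (mu r) 0 with h | h
      · nlinarith [hlamNonneg l, hr0 r]
      · have h1 : mu r * (1 - lam lmax) ≤ mu r * (1 - lam l) :=
          mul_le_mul_of_nonneg_left (by linarith [hlmax l]) h
        nlinarith [hrtop r, hc1', abs_nonneg (mu r0)]
    have hxhigh : mu r * (1 - lam l) < |mu r0| * (lam lmax - 1) := by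
      rcases eq_or_ne r r0 with hr | hr
      · have hl : l ≠ lmax := by
          intro hl; exact hq (by rw [hr, hl])
        have hll : lam l < lam lmax := hlmaxSimple l hl
        rw [hr, habs]
        nlinarith
      · have hmr : mu r0 < mu r := hr0Simple r hr
        rcases lt_or_ge (mu r) 0 with h | h
        · have h1 : mu r * (1 - lam l) ≤ mu r * (1 - lam lmax) :=
            mul_le_mul_of_nonpos_left (by linarith [hlmax l]) (le_of_lt h)
          rw [habs]
          nlinarith
        · have h1 : mu r * (1 - lam l) ≤ mu r := by
            nlinarith [hlamNonneg l]
          nlinarith [hrtop r, hc1']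
    rw [abs_lt]
    constructor
    · rw [hAdef, hadef]
      simp only
      nlinarith
    · rw [hAdef, hadef]
      simp only
      nlinarith
  -- define δ and C
  set S : Finset (Fin d × Fin n) := Finset.univ.erase (r0, lmax) with hSdef
  by_cases hS : S.Nonempty
  · set δ : ℝ := (S.sup' hS fun q => |a q|) / A with hδdef
    set C : ℝ := ∑ q ∈ S, |c q| * ‖E q‖ with hCdef
    have hsup_lt : (S.sup' hS fun q => |a q|) < A := by
      rw [Finset.sup'_lt_iff]
      intro q hqS
      exact habound q (Finset.ne_of_mem_erase hqS)
    have hsup_nonneg : 0 ≤ S.sup' hS fun q => |a q| := by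
      obtain ⟨q, hqS⟩ := hS
      exact le_trans (abs_nonneg (a q)) (Finset.le_sup' (fun q => |a q|) hqS)
    have hδ0 : 0 ≤ δ := div_nonneg hsup_nonneg (le_of_lt hA0)
    have hδ1 : δ < 1 := (div_lt_one hA0).mpr hsup_lt
    have hC0 : 0 ≤ C := Finset.sum_nonneg fun q _ =>
      mul_nonneg (abs_nonneg _) (norm_nonneg _)
    refine ⟨δ, C, hδ0, hδ1, hC0, fun m => ?_⟩
    have hdom : ((1 + τ * |mu r0| * (lam lmax - 1)) ^ m *
          (vecF 0 ⬝ᵥ fun p : Fin d × Fin n => ψ r0 p.1 * φ lmax p.2)) •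
            (fun p : Fin d × Fin n => ψ r0 p.1 * φ lmax p.2)
        = (c (r0, lmax) * a (r0, lmax) ^ m) • E (r0, lmax) := by
      rw [haq0, hcdef, hEdef]
      simp only
      rw [mul_comm (A ^ m)]
    have hsplit : vecF m - ((1 + τ * |mu r0| * (lam lmax - 1)) ^ m *
          (vecF 0 ⬝ᵥ fun p : Fin d × Fin n => ψ r0 p.1 * φ lmax p.2)) •
            (fun p : Fin d × Fin n => ψ r0 p.1 * φ lmax p.2)
        = ∑ q ∈ S, (c q * a q ^ m) • E q := by
      rw [hform m, hdom, hSdef]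
      rw [← Finset.sum_erase_add Finset.univ _ (Finset.mem_univ (r0, lmax))]
      abel
    rw [hsplit]
    calc ‖∑ q ∈ S, (c q * a q ^ m) • E q‖
        ≤ ∑ q ∈ S, ‖(c q * a q ^ m) • E q‖ := norm_sum_le _ _
      _ ≤ ∑ q ∈ S, (|c q| * ‖E q‖) * (δ * A) ^ m := by
          apply Finset.sum_le_sum
          intro q hqS
          rw [norm_smul, Real.norm_eq_abs, abs_mul, abs_pow]
          have h1 : |a q| ≤ δ * A := by
            rw [hδdef, div_mul_cancel₀ _ (ne_of_gt hA0)]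
            exact Finset.le_sup' (fun q => |a q|) hqS
          have h2 : |a q| ^ m ≤ (δ * A) ^ m :=
            pow_le_pow_left₀ (abs_nonneg _) h1 m
          calc |c q| * |a q| ^ m * ‖E q‖ ≤ |c q| * (δ * A) ^ m * ‖E q‖ := by
                apply mul_le_mul_of_nonneg_right _ (norm_nonneg _)
                exact mul_le_mul_of_nonneg_left h2 (abs_nonneg _)
            _ = (|c q| * ‖E q‖) * (δ * A) ^ m := by ring
      _ = A ^ m * (C * δ ^ m) := by
          rw [hCdef, Finset.sum_mul, Finset.mul_sum, mul_pow]
          apply Finset.sum_congr rfl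
          intros; ring
  · -- S empty: the only index is (r0, lmax), the error is 0
    refine ⟨0, 0, le_refl 0, one_pos, le_refl 0, fun m => ?_⟩
    have hall : ∀ q : Fin d × Fin n, q = (r0, lmax) := by
      intro q
      by_contra h
      exact hS ⟨q, Finset.mem_erase.mpr ⟨h, Finset.mem_univ q⟩⟩
    have hdom : ((1 + τ * |mu r0| * (lam lmax - 1)) ^ m *
          (vecF 0 ⬝ᵥ fun p : Fin d × Fin n => ψ r0 p.1 * φ lmax p.2)) •
            (fun p : Fin d × Fin n => ψ r0 p.1 * φ lmax p.2)
        = (c (r0, lmax) * a (r0, lmax) ^ m) • E (r0, lmax) := by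
      rw [haq0, hcdef, hEdef]
      simp only
      rw [mul_comm (A ^ m)]
    have hsplit : vecF m - ((1 + τ * |mu r0| * (lam lmax - 1)) ^ m *
          (vecF 0 ⬝ᵥ fun p : Fin d × Fin n => ψ r0 p.1 * φ lmax p.2)) •
            (fun p : Fin d × Fin n => ψ r0 p.1 * φ lmax p.2) = 0 := by
      rw [hform m, hdom]
      rw [Fintype.sum_eq_single (r0, lmax) fun q h => absurd (hall q) h]
      abel
    rw [hsplit]
    simp
end

section
/- Without residual connection, the dynamics F(t+τ) = τ Ā F(t) W on a connected non-bipartite graph is always low-frequency dominant: for almost every F(0), the normalized Dirichlet energy E^Dir(F(mτ))/‖F(mτ)‖² → 0 as m → ∞, regardless of the symmetric matrix W. -/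
open Matrix Kronecker Finset Filter

/-- Without the residual connection, the dynamics F(t+τ) = τ Ā F(t) W on a
connected non-bipartite graph is always low-frequency dominant: for (almost
every) F(0) whose projection onto (top-modulus eigenspace of W) ⊗ ker Δ is
nonzero, E^Dir(F(mτ))/‖F(mτ)‖² → 0 as m → ∞, regardless of the symmetric W. -/
theorem no_residual_always_LFD (n d : ℕ)
    (Δ : Matrix (Fin n) (Fin n) ℝ)
    (W : Matrix (Fin d) (Fin d) ℝ) (hW : W.IsSymm) (hWne : W ≠ 0)
    (τ : ℝ) (hτ : 0 < τ)
    (φ : Fin n → Fin n → ℝ) (lam : Fin n → ℝ)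
    (hφON : ∀ k l, φ k ⬝ᵥ φ l = if k = l then (1 : ℝ) else 0)
    (hφ : ∀ l, Δ.mulVec (φ l) = lam l • φ l)
    (ψ : Fin d → Fin d → ℝ) (mu : Fin d → ℝ)
    (hψON : ∀ r s, ψ r ⬝ᵥ ψ s = if r = s then (1 : ℝ) else 0)
    (hψ : ∀ r, W.mulVec (ψ r) = mu r • ψ r)
    -- connected: λ_0 = 0 simple; non-bipartite: all eigenvalues < 2
    (l0 : Fin n) (hl0 : lam l0 = 0)
    (hconn : ∀ l, l ≠ l0 → 0 < lam l)
    (hlam2 : ∀ l, lam l < 2)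
    (F : ℕ → Matrix (Fin n) (Fin d) ℝ)
    (hrec : ∀ m, F (m + 1) = τ • (((1 : Matrix (Fin n) (Fin n) ℝ) - Δ) * F m * W))
    -- generic initial condition: nonzero component on the dominant eigenspace
    (hgen : ∃ r : Fin d, (∀ s, |mu s| ≤ |mu r|) ∧
      ((fun p : Fin d × Fin n => F 0 p.2 p.1) ⬝ᵥ
        fun p : Fin d × Fin n => ψ r p.1 * φ l0 p.2) ≠ 0) :
    Tendsto (fun m => ((F m)ᵀ * Δ * F m).trace / ∑ i, ∑ r, (F m i r) ^ 2)
      atTop (nhds 0) := by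
  obtain ⟨r, hmax, hc0⟩ := hgen
  set Φ : Matrix (Fin n) (Fin n) ℝ := Matrix.of φ with hΦdef
  set Ψ : Matrix (Fin d) (Fin d) ℝ := Matrix.of ψ with hΨdef
  set D : Matrix (Fin n) (Fin n) ℝ := Matrix.diagonal lam with hDdef
  set M : Matrix (Fin d) (Fin d) ℝ := Matrix.diagonal mu with hMdef
  have hΦ1 : Φ * Φᵀ = 1 := by
    ext k l
    simpa [hΦdef, Matrix.mul_apply, Matrix.one_apply, dotProduct] using hφON k l
  have hΦ2 : Φᵀ * Φ = 1 := mul_eq_one_comm.mp hΦ1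
  have hΨ1 : Ψ * Ψᵀ = 1 := by
    ext k l
    simpa [hΨdef, Matrix.mul_apply, Matrix.one_apply, dotProduct] using hψON k l
  have hΨ2 : Ψᵀ * Ψ = 1 := mul_eq_one_comm.mp hΨ1
  -- eigen relations in matrix form
  have hΔΦ : Δ * Φᵀ = Φᵀ * D := by
    ext i l
    have h := congrFun (hφ l) i
    simp only [Matrix.mulVec, dotProduct, Pi.smul_apply, smul_eq_mul] at h
    simp only [hΦdef, hDdef, Matrix.mul_apply, Matrix.transpose_apply, Matrix.of_apply,
      Matrix.diagonal_apply, mul_ite, mul_zero, Finset.sum_ite_eq, Finset.sum_ite_eq',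
      Finset.mem_univ, if_true]
    rw [h]; ring
  have hWΨ : W * Ψᵀ = Ψᵀ * M := by
    ext i l
    have h := congrFun (hψ l) i
    simp only [Matrix.mulVec, dotProduct, Pi.smul_apply, smul_eq_mul] at h
    simp only [hΨdef, hMdef, Matrix.mul_apply, Matrix.transpose_apply, Matrix.of_apply,
      Matrix.diagonal_apply, mul_ite, mul_zero, Finset.sum_ite_eq, Finset.sum_ite_eq',
      Finset.mem_univ, if_true]
    rw [h]; ring
  have hΔ : Δ = Φᵀ * D * Φ := by
    calc Δ = Δ * (Φᵀ * Φ) := by rw [hΦ2, mul_one]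
    _ = (Δ * Φᵀ) * Φ := by rw [Matrix.mul_assoc]
    _ = Φᵀ * D * Φ := by rw [hΔΦ]
  have hWeq : W = Ψᵀ * M * Ψ := by
    calc W = W * (Ψᵀ * Ψ) := by rw [hΨ2, mul_one]
    _ = (W * Ψᵀ) * Ψ := by rw [Matrix.mul_assoc]
    _ = Ψᵀ * M * Ψ := by rw [hWΨ]
  -- coefficient matrices
  set G : ℕ → Matrix (Fin n) (Fin d) ℝ := fun m => Φ * F m * Ψᵀ with hGdef
  have hF : ∀ m, F m = Φᵀ * G m * Ψ := by
    intro m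
    calc F m = (Φᵀ * Φ) * F m * (Ψᵀ * Ψ) := by rw [hΦ2, hΨ2, Matrix.one_mul, Matrix.mul_one]
    _ = Φᵀ * (Φ * F m * Ψᵀ) * Ψ := by simp only [Matrix.mul_assoc]
    _ = Φᵀ * G m * Ψ := rfl
  -- recurrence for coefficients
  have hA : Φ * ((1 : Matrix (Fin n) (Fin n) ℝ) - Δ) * Φᵀ = 1 - D := by
    have h2 : Φ * Δ * Φᵀ = D := by
      rw [Matrix.mul_assoc, hΔΦ, ← Matrix.mul_assoc, hΦ1, Matrix.one_mul]
    rw [Matrix.mul_sub, Matrix.mul_one, Matrix.sub_mul, hΦ1, h2]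
  have hB : Ψ * W * Ψᵀ = M := by
    rw [Matrix.mul_assoc, hWΨ, ← Matrix.mul_assoc, hΨ1, Matrix.one_mul]
  have hGrec : ∀ m, G (m + 1) = τ • ((1 - D) * G m * M) := by
    intro m
    have : G (m + 1) = Φ * (τ • (((1 : Matrix (Fin n) (Fin n) ℝ) - Δ) * F m * W)) * Ψᵀ := by
      show Φ * F (m + 1) * Ψᵀ = _
      rw [hrec m]
    rw [this, hF m]
    rw [Matrix.mul_smul, Matrix.smul_mul]
    congr 1
    calc Φ * (((1 : Matrix (Fin n) (Fin n) ℝ) - Δ) * (Φᵀ * G m * Ψ) * W) * Ψᵀ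
        = (Φ * ((1 : Matrix (Fin n) (Fin n) ℝ) - Δ) * Φᵀ) * G m * (Ψ * W * Ψᵀ) := by
          simp only [Matrix.mul_assoc]
    _ = (1 - D) * G m * M := by rw [hA, hB]
  -- entrywise solution
  have hGent : ∀ m l s, G m l s = (τ * ((1 - lam l) * mu s)) ^ m * G 0 l s := by
    intro m
    induction m with
    | zero => intro l s; simp
    | succ m ih =>
      intro l s
      have h1 : G (m + 1) l s = τ * ((1 - lam l) * (G m l s * mu s)) := by
        rw [hGrec m]
        simp only [Matrix.smul_apply, smul_eq_mul]
        congr 1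
        rw [hMdef, Matrix.mul_diagonal, Matrix.sub_mul, Matrix.one_mul, hDdef,
          Matrix.sub_apply, Matrix.diagonal_mul]
        ring
      rw [h1, ih l s, pow_succ]
      ring
  -- the two scalar quantities
  have htrace : ∀ m, ((F m)ᵀ * Δ * (F m)).trace = ∑ l, ∑ s, lam l * (G m l s) ^ 2 := by
    intro m
    have e1 : (F m)ᵀ * Δ * (F m) = Ψᵀ * ((G m)ᵀ * D * G m) * Ψ := by
      rw [hF m, hΔ]
      rw [Matrix.transpose_mul, Matrix.transpose_mul, Matrix.transpose_transpose]
      calc Ψᵀ * ((G m)ᵀ * Φ) * (Φᵀ * D * Φ) * (Φᵀ * G m * Ψ)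
          = Ψᵀ * ((G m)ᵀ * ((Φ * Φᵀ) * (D * ((Φ * Φᵀ) * (G m * Ψ))))) := by
            simp only [Matrix.mul_assoc]
      _ = Ψᵀ * ((G m)ᵀ * (D * (G m * Ψ))) := by rw [hΦ1, Matrix.one_mul, Matrix.one_mul]
      _ = Ψᵀ * ((G m)ᵀ * D * G m) * Ψ := by simp only [Matrix.mul_assoc]
    rw [e1]
    have e2 : (Ψᵀ * ((G m)ᵀ * D * G m) * Ψ).trace = ((G m)ᵀ * D * G m).trace := by
      rw [Matrix.mul_assoc, Matrix.trace_mul_comm, Matrix.mul_assoc, hΨ1, Matrix.mul_one]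
    rw [e2]
    rw [Finset.sum_comm]
    simp only [Matrix.trace, Matrix.diag, Matrix.mul_apply, Matrix.transpose_apply]
    apply Finset.sum_congr rfl; intro s _
    simp only [Finset.sum_mul]
    apply Finset.sum_congr rfl; intro l _
    simp only [hDdef, Matrix.diagonal_apply, ite_mul, mul_ite, zero_mul, mul_zero,
      Finset.sum_ite_eq, Finset.sum_ite_eq', Finset.mem_univ, if_true, Finset.mul_sum,
      Finset.sum_mul]
    ring
  have hnorm : ∀ m, (∑ i, ∑ s, (F m i s) ^ 2) = ∑ l, ∑ s, (G m l s) ^ 2 := by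
    intro m
    have e1 : (F m)ᵀ * (F m) = Ψᵀ * ((G m)ᵀ * G m) * Ψ := by
      rw [hF m, Matrix.transpose_mul, Matrix.transpose_mul, Matrix.transpose_transpose]
      calc Ψᵀ * ((G m)ᵀ * Φ) * (Φᵀ * G m * Ψ)
          = Ψᵀ * ((G m)ᵀ * ((Φ * Φᵀ) * (G m * Ψ))) := by simp only [Matrix.mul_assoc]
      _ = Ψᵀ * ((G m)ᵀ * (G m * Ψ)) := by rw [hΦ1, Matrix.one_mul]
      _ = Ψᵀ * ((G m)ᵀ * G m) * Ψ := by simp only [Matrix.mul_assoc]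
    have e2 : (∑ i, ∑ s, (F m i s) ^ 2) = ((F m)ᵀ * (F m)).trace := by
      rw [Finset.sum_comm]
      simp only [Matrix.trace, Matrix.diag, Matrix.mul_apply, Matrix.transpose_apply]
      apply Finset.sum_congr rfl; intro s _
      apply Finset.sum_congr rfl; intro i _
      ring
    have e3 : (Ψᵀ * ((G m)ᵀ * G m) * Ψ).trace = ((G m)ᵀ * G m).trace := by
      rw [Matrix.mul_assoc, Matrix.trace_mul_comm, Matrix.mul_assoc, hΨ1, Matrix.mul_one]
    rw [e2, e1, e3, Finset.sum_comm]
    simp only [Matrix.trace, Matrix.diag, Matrix.mul_apply, Matrix.transpose_apply]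
    apply Finset.sum_congr rfl; intro s _
    apply Finset.sum_congr rfl; intro l _
    ring
  -- scalar data
  set q : Fin n → Fin d → ℝ := fun l s => (τ * ((1 - lam l) * mu s)) ^ 2 with hqdef
  set a : Fin n → Fin d → ℝ := fun l s => (G 0 l s) ^ 2 with hadef
  have hGsq : ∀ m l s, (G m l s) ^ 2 = q l s ^ m * a l s := by
    intro m l s
    rw [hGent m l s, mul_pow, hqdef, hadef, ← pow_mul, ← pow_mul, Nat.mul_comm]
  have hqnn : ∀ l s, 0 ≤ q l s := fun l s => sq_nonneg _
  have hann : ∀ l s, 0 ≤ a l s := fun l s => sq_nonneg _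
  have hlamnn : ∀ l, 0 ≤ lam l := by
    intro l
    rcases eq_or_ne l l0 with h | h
    · rw [h, hl0]
    · exact (hconn l h).le
  -- μ_r ≠ 0
  have hμr : mu r ≠ 0 := by
    intro h0
    apply hWne
    have hmu0 : ∀ s, mu s = 0 := by
      intro s
      have := hmax s
      rw [h0, abs_zero] at this
      exact abs_eq_zero.mp (le_antisymm this (abs_nonneg _))
    have : M = 0 := by
      rw [hMdef]
      ext i j
      simp [Matrix.diagonal_apply, hmu0]
    rw [hWeq, this, Matrix.mul_zero, Matrix.zero_mul]
  -- dominant coefficient nonzero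
  have hG0 : G 0 l0 r ≠ 0 := by
    have e : ((fun p : Fin d × Fin n => F 0 p.2 p.1) ⬝ᵥ
        fun p : Fin d × Fin n => ψ r p.1 * φ l0 p.2) = G 0 l0 r := by
      simp only [dotProduct, Fintype.sum_prod_type, hGdef, hΦdef, hΨdef, Matrix.mul_apply,
        Matrix.transpose_apply, Matrix.of_apply, Finset.sum_mul]
      apply Finset.sum_congr rfl; intro s _
      apply Finset.sum_congr rfl; intro i _
      ring
    rw [← e]; exact hc0
  set a0 : ℝ := a l0 r with ha0def
  have ha0pos : 0 < a0 := by
    have : a0 = (G 0 l0 r) ^ 2 := rfl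
    rw [this]
    exact (sq_nonneg _).lt_of_ne (Ne.symm (pow_ne_zero 2 hG0))
  -- dominant growth rate
  set Q : ℝ := q l0 r with hQdef
  have hQpos : 0 < Q := by
    have hne : τ * ((1 - lam l0) * mu r) ≠ 0 := by
      rw [hl0]
      simp only [sub_zero, one_mul]
      exact mul_ne_zero hτ.ne' hμr
    exact (sq_nonneg _).lt_of_ne (Ne.symm (pow_ne_zero 2 hne))
  have hqlt : ∀ l, l ≠ l0 → ∀ s, q l s < Q := by
    intro l hl s
    have h1 : (1 - lam l) ^ 2 < 1 := by nlinarith [hconn l hl, hlam2 l]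
    have h2 : mu s ^ 2 ≤ mu r ^ 2 := by
      have h := hmax s
      nlinarith [abs_nonneg (mu s), sq_abs (mu s), sq_abs (mu r)]
    have h3 : 0 < mu r ^ 2 := (sq_nonneg _).lt_of_ne (Ne.symm (pow_ne_zero 2 hμr))
    have h4 : 0 < τ ^ 2 := by positivity
    show (τ * ((1 - lam l) * mu s)) ^ 2 < (τ * ((1 - lam l0) * mu r)) ^ 2
    rw [hl0]
    have e1 : (τ * ((1 - lam l) * mu s)) ^ 2 = τ ^ 2 * ((1 - lam l) ^ 2 * mu s ^ 2) := by
      ring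
    have e2 : (τ * ((1 - (0 : ℝ)) * mu r)) ^ 2 = τ ^ 2 * mu r ^ 2 := by ring
    rw [e1, e2]
    have h5 : (1 - lam l) ^ 2 * mu s ^ 2 < mu r ^ 2 := by
      nlinarith [mul_le_mul_of_nonneg_left h2 (sq_nonneg (1 - lam l)),
        mul_lt_mul_of_pos_right h1 h3]
    exact (mul_lt_mul_iff_right₀ h4).mpr h5
  -- rewrite the goal as a ratio of explicit scalar sequences
  have hgoal : (fun m => ((F m)ᵀ * Δ * F m).trace / ∑ i, ∑ s, (F m i s) ^ 2)
      = fun m => (∑ l, ∑ s, lam l * (q l s ^ m * a l s)) /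
          (∑ l, ∑ s, q l s ^ m * a l s) := by
    funext m
    rw [htrace m, hnorm m]
    congr 1
    · exact Finset.sum_congr rfl fun l _ => Finset.sum_congr rfl fun s _ => by
        rw [hGsq m l s]
    · exact Finset.sum_congr rfl fun l _ => Finset.sum_congr rfl fun s _ => hGsq m l s
  have hnum_nn : ∀ m, 0 ≤ ∑ l, ∑ s, lam l * (q l s ^ m * a l s) := fun m =>
    Finset.sum_nonneg fun l _ => Finset.sum_nonneg fun s _ =>
      mul_nonneg (hlamnn l) (mul_nonneg (pow_nonneg (hqnn l s) m) (hann l s))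
  have hden_ge : ∀ m, a0 * Q ^ m ≤ ∑ l, ∑ s, q l s ^ m * a l s := by
    intro m
    have h1 : q l0 r ^ m * a l0 r ≤ ∑ s, q l0 s ^ m * a l0 s :=
      Finset.single_le_sum
        (fun s _ => mul_nonneg (pow_nonneg (hqnn l0 s) m) (hann l0 s)) (Finset.mem_univ r)
    have h2 : (∑ s, q l0 s ^ m * a l0 s) ≤ ∑ l, ∑ s, q l s ^ m * a l s :=
      Finset.single_le_sum
        (fun l _ => Finset.sum_nonneg fun s _ =>
          mul_nonneg (pow_nonneg (hqnn l s) m) (hann l s)) (Finset.mem_univ l0)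
    calc a0 * Q ^ m = q l0 r ^ m * a l0 r := by rw [mul_comm]
    _ ≤ _ := le_trans h1 h2
  have hQm_pos : ∀ m, (0 : ℝ) < a0 * Q ^ m := fun m => mul_pos ha0pos (pow_pos hQpos m)
  have hratio_nn : ∀ m, 0 ≤ (∑ l, ∑ s, lam l * (q l s ^ m * a l s)) /
      (∑ l, ∑ s, q l s ^ m * a l s) := fun m =>
    div_nonneg (hnum_nn m) (le_trans (hQm_pos m).le (hden_ge m))
  have hle : ∀ m, (∑ l, ∑ s, lam l * (q l s ^ m * a l s)) /
      (∑ l, ∑ s, q l s ^ m * a l s)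
      ≤ ∑ l, ∑ s, (lam l * a l s / a0) * (q l s / Q) ^ m := by
    intro m
    have step1 := div_le_div_of_nonneg_left (hnum_nn m) (hQm_pos m) (hden_ge m)
    have ha0' : a0 ≠ 0 := ha0pos.ne'
    have hQm' : Q ^ m ≠ 0 := (pow_pos hQpos m).ne'
    have e : (∑ l, ∑ s, lam l * (q l s ^ m * a l s)) / (a0 * Q ^ m)
        = ∑ l, ∑ s, (lam l * a l s / a0) * (q l s / Q) ^ m := by
      rw [Finset.sum_div]
      apply Finset.sum_congr rfl; intro l _
      rw [Finset.sum_div]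
      apply Finset.sum_congr rfl; intro s _
      rw [div_pow]
      field_simp
    rw [e] at step1
    exact step1
  have hbound : Tendsto (fun m => ∑ l, ∑ s, (lam l * a l s / a0) * (q l s / Q) ^ m)
      atTop (nhds 0) := by
    have hterm : ∀ l s, Tendsto (fun m => (lam l * a l s / a0) * (q l s / Q) ^ m)
        atTop (nhds 0) := by
      intro l s
      rcases eq_or_ne l l0 with h | h
      · subst h
        simp only [hl0, zero_mul, zero_div]
        exact tendsto_const_nhds
      · have h0 : 0 ≤ q l s / Q := div_nonneg (hqnn l s) hQpos.le
        have h1 : q l s / Q < 1 := (div_lt_one hQpos).mpr (hqlt l h s)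
        have h2 := (tendsto_pow_atTop_nhds_zero_of_lt_one h0 h1).const_mul
          (lam l * a l s / a0)
        simpa using h2
    have h := tendsto_finset_sum (Finset.univ (α := Fin n))
      (fun l _ => tendsto_finset_sum (Finset.univ (α := Fin d)) (fun s _ => hterm l s))
    simpa using h
  rw [hgoal]
  exact tendsto_of_tendsto_of_tendsto_of_le_of_le tendsto_const_nhds hbound
    hratio_nn hle
end

section
/- If σ: ℝ → ℝ satisfies x·σ(x) ≥ 0 for all x, and F(t) solves the nonlinear ODE vec(Ḟ(t)) = σ(−(1/2)∇E_θ(vec(F(t)))) applied componentwise, with E_θ(F) = ⟨vec(F), M vec(F) + 2 b⟩ for a symmetric matrix M and fixed vector b, then t ↦ E_θ(F(t)) is non-increasing. -/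
open Matrix

/-- If x·σ(x) ≥ 0 and F solves the nonlinear ODE
vec(Ḟ(t)) = σ(−(1/2)∇E_θ(vec F(t))) componentwise, where
E_θ(x) = ⟨x, M x + 2b⟩ with M symmetric, then t ↦ E_θ(F(t)) is non-increasing. -/
theorem nonlinear_energy_nonincreasing (N : ℕ)
    (M : Matrix (Fin N) (Fin N) ℝ) (hM : M.IsSymm)
    (b : Fin N → ℝ) (σ : ℝ → ℝ) (hσ : ∀ x : ℝ, 0 ≤ x * σ x)
    (F : ℝ → Fin N → ℝ)
    (hF : ∀ t, HasDerivAt F (fun i => σ ((-(M.mulVec (F t) + b)) i)) t) :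
    ∀ s t : ℝ, s ≤ t →
      F t ⬝ᵥ (M.mulVec (F t) + (2 : ℝ) • b) ≤ F s ⬝ᵥ (M.mulVec (F s) + (2 : ℝ) • b) := by
  set g : ℝ → ℝ := fun t => F t ⬝ᵥ (M.mulVec (F t) + (2 : ℝ) • b) with hg
  -- velocity
  set v : ℝ → Fin N → ℝ := fun t i => σ ((-(M.mulVec (F t) + b)) i) with hv
  have hFi : ∀ t i, HasDerivAt (fun t => F t i) (v t i) t := by
    intro t i
    exact hasDerivAt_pi.mp (hF t) i
  have hderiv : ∀ t, HasDerivAt g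
      (∑ i, (v t i * (M.mulVec (F t) i + 2 * b i) + F t i * (M.mulVec (v t) i))) t := by
    intro t
    have h1 : HasDerivAt (fun u => ∑ i, F u i * (M.mulVec (F u) i + 2 * b i))
        (∑ i, (v t i * (M.mulVec (F t) i + 2 * b i) + F t i * (M.mulVec (v t) i))) t := by
      apply HasDerivAt.fun_sum
      intro i _
      have hmv : HasDerivAt (fun u => M.mulVec (F u) i + 2 * b i) (M.mulVec (v t) i) t := by
        have : HasDerivAt (fun u => ∑ j, M i j * F u j) (∑ j, M i j * v t j) t :=
          HasDerivAt.fun_sum fun j _ => (hFi t j).const_mul (M i j)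
        simpa [Matrix.mulVec, dotProduct] using this.add_const (2 * b i)
      exact (hFi t i).mul hmv
    have heq : g = fun u => ∑ i, F u i * (M.mulVec (F u) i + 2 * b i) := by
      funext u
      simp [hg, dotProduct, Pi.add_apply, Pi.smul_apply, smul_eq_mul]
    rw [heq]
    exact h1
  -- derivative is nonpositive
  have hnonpos : ∀ t,
      (∑ i, (v t i * (M.mulVec (F t) i + 2 * b i) + F t i * (M.mulVec (v t) i))) ≤ 0 := by
    intro t
    have hsym : ∀ i j, M i j = M j i := fun i j => by
      have := congrFun (congrFun hM i) j
      simpa [Matrix.transpose_apply] using this.symm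
    have hswap : (∑ i, F t i * (M.mulVec (v t) i)) = ∑ i, M.mulVec (F t) i * v t i := by
      simp only [Matrix.mulVec, dotProduct, Finset.mul_sum, Finset.sum_mul]
      rw [Finset.sum_comm]
      congr 1; funext j
      congr 1; funext i
      rw [hsym j i]; ring
    have : (∑ i, (v t i * (M.mulVec (F t) i + 2 * b i) + F t i * (M.mulVec (v t) i)))
        = ∑ i, 2 * ((M.mulVec (F t) i + b i) * v t i) := by
      rw [Finset.sum_add_distrib, hswap, ← Finset.sum_add_distrib]
      congr 1; funext i; ring
    rw [this]
    apply Finset.sum_nonpos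
    intro i _
    have h := hσ ((-(M.mulVec (F t) + b)) i)
    have : (M.mulVec (F t) i + b i) * v t i ≤ 0 := by
      have hz : (-(M.mulVec (F t) + b)) i = -(M.mulVec (F t) i + b i) := by
        simp
      rw [hz] at h
      have : 0 ≤ -(M.mulVec (F t) i + b i) * v t i := by
        simpa [hv, hz] using h
      nlinarith
    linarith
  intro s t hst
  have : Antitone g := by
    apply antitone_of_deriv_nonpos
    · exact fun x => (hderiv x).differentiableAt
    · intro x
      rw [(hderiv x).deriv]
      exact hnonpos x
  exact this hst
end

section
/- For the discrete nonlinear update vec(F(t+τ)) = vec(F(t)) + τσ(Z(t)) with Z(t) = −(M vec(F(t)) + b), M symmetric, and σ componentwise with xσ(x) ≥ 0, the energy E_θ(F) = ⟨vec(F), M vec(F) + 2b⟩ satisfies E_θ(F(t+τ)) − E_θ(F(t)) ≤ c‖F(t+τ) − F(t)‖², where c is the largest eigenvalue of M if M has a positive eigenvalue and c = 0 otherwise. -/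
open Matrix

/-- Discrete nonlinear update: for x' = x + τ σ(Z) with Z = −(Mx + b),
M symmetric and xσ(x) ≥ 0, the energy E_θ(x) = ⟨x, Mx + 2b⟩ satisfies
E_θ(x') − E_θ(x) ≤ c ‖x' − x‖², where c is the largest eigenvalue of M if M has
a positive eigenvalue and c = 0 otherwise (i.e. c = max(0, λ_max(M))). -/
theorem discrete_nonlinear_energy_inequality (N : ℕ)
    (M : Matrix (Fin N) (Fin N) ℝ) (hM : M.IsHermitian)
    (b : Fin N → ℝ) (σ : ℝ → ℝ) (hσ : ∀ x : ℝ, 0 ≤ x * σ x)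
    (τ : ℝ) (hτ : 0 < τ)
    (c : ℝ) (hc : IsGreatest (insert (0 : ℝ) (Set.range hM.eigenvalues)) c)
    (x x' : Fin N → ℝ)
    (hupd : x' = x + τ • fun i => σ ((-(M.mulVec x + b)) i)) :
    (x' ⬝ᵥ (M.mulVec x' + (2 : ℝ) • b)) - (x ⬝ᵥ (M.mulVec x + (2 : ℝ) • b))
      ≤ c * ((x' - x) ⬝ᵥ (x' - x)) := by
  -- Step 1: c • 1 - M is positive semidefinite
  have hev : ∀ i, hM.eigenvalues i ≤ c := fun i => hc.2 (Set.mem_insert_of_mem _ ⟨i, rfl⟩)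
  have hpsd : (c • (1 : Matrix (Fin N) (Fin N) ℝ) - M).PosSemidef := by
    have hU := (Matrix.mem_unitaryGroup_iff).mp (hM.eigenvectorUnitary).2
    have hspec := hM.spectral_theorem
    have hdiag : c • (1 : Matrix (Fin N) (Fin N) ℝ) - M
        = (hM.eigenvectorUnitary : Matrix (Fin N) (Fin N) ℝ)
          * diagonal (fun i => c - hM.eigenvalues i)
          * (star (hM.eigenvectorUnitary : Matrix (Fin N) (Fin N) ℝ)) := by
      have : diagonal (fun i => c - hM.eigenvalues i)
          = c • (1 : Matrix (Fin N) (Fin N) ℝ) - diagonal (RCLike.ofReal ∘ hM.eigenvalues) := by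
        rw [← diagonal_one, ← diagonal_smul, ← diagonal_sub]
        ext i j
        simp [Matrix.one_apply, Matrix.diagonal_apply, mul_ite]
      rw [Unitary.conjStarAlgAut_apply] at hspec
      rw [this, Matrix.mul_sub, Matrix.sub_mul, ← hspec]
      congr 1
      rw [Matrix.mul_smul, Matrix.smul_mul, mul_one, hU]
    rw [hdiag]
    exact (Matrix.PosSemidef.diagonal (fun i => sub_nonneg.mpr (hev i))).mul_mul_conjTranspose_same _
  -- quadratic bound
  set d : Fin N → ℝ := x' - x with hd
  have hquad : d ⬝ᵥ M.mulVec d ≤ c * (d ⬝ᵥ d) := by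
    have := hpsd.dotProduct_mulVec_nonneg d
    rw [star_trivial, Matrix.sub_mulVec, Matrix.smul_mulVec, Matrix.one_mulVec,
      dotProduct_sub, dotProduct_smul, smul_eq_mul] at this
    linarith [this]
  -- nonlinearity term
  set z : Fin N → ℝ := M.mulVec x + b with hz
  have hdz : d ⬝ᵥ z ≤ 0 := by
    have hdval : d = τ • fun i => σ (-(z i)) := by
      rw [hd, hupd]; ext i; simp [hz]
    rw [hdval]
    have : (τ • fun i => σ (-(z i))) ⬝ᵥ z = τ * ∑ i, σ (-(z i)) * z i := by
      simp [dotProduct, Finset.mul_sum, mul_assoc]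
    rw [this]
    have : ∑ i, σ (-(z i)) * z i ≤ 0 := by
      apply Finset.sum_nonpos
      intro i _
      have := hσ (-(z i))
      nlinarith
    nlinarith
  -- algebra
  have hx' : x' = x + d := by rw [hd]; ext i; simp
  have hsymm : ∀ u v : Fin N → ℝ, u ⬝ᵥ M.mulVec v = v ⬝ᵥ M.mulVec u := by
    intro u v
    have hMt : Mᵀ = M := by
      rw [Matrix.IsHermitian, conjTranspose_eq_transpose_of_trivial] at hM
      exact hM
    rw [dotProduct_mulVec, ← Matrix.mulVec_transpose, dotProduct_comm, hMt]
  have expand : (x' ⬝ᵥ (M.mulVec x' + (2 : ℝ) • b)) - (x ⬝ᵥ (M.mulVec x + (2 : ℝ) • b))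
      = d ⬝ᵥ M.mulVec d + 2 * (d ⬝ᵥ z) := by
    rw [hx', hz]
    simp only [Matrix.mulVec_add, dotProduct_add, add_dotProduct, dotProduct_smul, smul_eq_mul]
    have := hsymm x d
    ring_nf
    linarith [hsymm x d]
  rw [expand]
  linarith
end

section
/- For the gradient flow Ḟ(t) = −Δ F(t) WᵀW with arbitrary W ∈ ℝ^{d×d}, the Dirichlet energy satisfies E^Dir(F(t)) ≤ e^{−2t·gap(WᵀW)·gap(Δ)}·λ_{n−1}·‖F(0)‖² + E^Dir(F(0) projected channel-wise onto ker(WᵀW)) for all t ≥ 0; in particular if W is invertible then E^Dir(F(t)) → 0 exponentially. -/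
open Matrix Finset Filter

noncomputable def coeffs {A : Matrix (Fin m) (Fin m) ℝ} (hA : A.IsHermitian)
    (w : Fin m → ℝ) : Fin m → ℝ :=
  fun i => hA.eigenvectorBasis.repr ((WithLp.equiv 2 (Fin m → ℝ)).symm w) i

lemma dot_eq_inner (x y : Fin m → ℝ) :
    x ⬝ᵥ y = (inner ℝ ((WithLp.equiv 2 (Fin m → ℝ)).symm x)
      ((WithLp.equiv 2 (Fin m → ℝ)).symm y) : ℝ) := by
  simp only [PiLp.inner_apply, RCLike.inner_apply, starRingEnd_apply, star_trivial, dotProduct]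
  exact Finset.sum_congr rfl fun i _ => mul_comm _ _

lemma coeffs_eq {A : Matrix (Fin m) (Fin m) ℝ} (hA : A.IsHermitian) (w : Fin m → ℝ) (i : Fin m) :
    coeffs hA w i = ⇑(hA.eigenvectorBasis i) ⬝ᵥ w := by
  rw [coeffs, hA.eigenvectorBasis.repr_apply_apply, dot_eq_inner]
  rfl

lemma herm_transpose {A : Matrix (Fin m) (Fin m) ℝ} (hA : A.IsHermitian) : Aᵀ = A := by
  exact (Matrix.conjTranspose_eq_transpose_of_trivial A).symm.trans hA.eq

lemma coeffs_mulVec {A : Matrix (Fin m) (Fin m) ℝ} (hA : A.IsHermitian) (w : Fin m → ℝ) (i : Fin m) :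
    coeffs hA (A *ᵥ w) i = hA.eigenvalues i * coeffs hA w i := by
  rw [coeffs_eq, coeffs_eq, Matrix.dotProduct_mulVec, ← Matrix.mulVec_transpose,
    herm_transpose hA, hA.mulVec_eigenvectorBasis, smul_dotProduct]
  rfl

lemma dot_self_eq_sum {A : Matrix (Fin m) (Fin m) ℝ} (hA : A.IsHermitian) (w : Fin m → ℝ) :
    w ⬝ᵥ w = ∑ i, coeffs hA w i ^ 2 := by
  rw [dot_eq_inner, ← hA.eigenvectorBasis.repr.inner_map_map]
  simp only [PiLp.inner_apply, RCLike.inner_apply, starRingEnd_apply, star_trivial]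
  exact Finset.sum_congr rfl fun i _ => (sq _).symm

lemma quad_eq_sum {A : Matrix (Fin m) (Fin m) ℝ} (hA : A.IsHermitian) (w : Fin m → ℝ) :
    w ⬝ᵥ (A *ᵥ w) = ∑ i, hA.eigenvalues i * coeffs hA w i ^ 2 := by
  rw [dot_eq_inner, ← hA.eigenvectorBasis.repr.inner_map_map]
  simp only [PiLp.inner_apply, RCLike.inner_apply, starRingEnd_apply, star_trivial]
  refine Finset.sum_congr rfl fun i _ => ?_
  have h1 : (hA.eigenvectorBasis.repr ((WithLp.equiv 2 (Fin m → ℝ)).symm (A *ᵥ w))) i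
      = hA.eigenvalues i * coeffs hA w i := coeffs_mulVec hA w i
  have h2 : (hA.eigenvectorBasis.repr ((WithLp.equiv 2 (Fin m → ℝ)).symm w)) i
      = coeffs hA w i := rfl
  rw [h1, h2]; ring


variable {m : ℕ}

lemma conj_quad (M A : Matrix (Fin m) (Fin m) ℝ) (hA : Aᵀ = A) (x : Fin m → ℝ) :
    (M *ᵥ x) ⬝ᵥ (A *ᵥ (M *ᵥ x)) = x ⬝ᵥ ((Mᵀ * A * M) *ᵥ x) := by
  rw [Matrix.mulVec_mulVec, Matrix.dotProduct_mulVec, ← Matrix.mulVec_transpose,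
    Matrix.mulVec_mulVec, Matrix.transpose_mul, hA, dotProduct_comm,
    Matrix.dotProduct_mulVec, ← Matrix.mulVec_transpose]

lemma traceQF (A : Matrix (Fin m) (Fin m) ℝ) {p : ℕ} (H : Matrix (Fin m) (Fin p) ℝ) :
    (Hᵀ * A * H).trace = ∑ r, (fun i => H i r) ⬝ᵥ (A *ᵥ (fun i => H i r)) := by
  simp only [Matrix.trace, Matrix.diag_apply, Matrix.mul_apply, Matrix.transpose_apply,
    dotProduct, Matrix.mulVec, Finset.sum_mul, Finset.mul_sum]
  refine Finset.sum_congr rfl fun s _ => ?_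
  rw [Finset.sum_comm]
  exact Finset.sum_congr rfl fun i _ => Finset.sum_congr rfl fun j _ => by ring

lemma quad_le_max {A : Matrix (Fin m) (Fin m) ℝ} (hA : A.PosSemidef) {lm : ℝ}
    (hlm : ∀ i, hA.isHermitian.eigenvalues i ≤ lm) (x : Fin m → ℝ) :
    x ⬝ᵥ (A *ᵥ x) ≤ lm * (x ⬝ᵥ x) := by
  rw [quad_eq_sum hA.isHermitian, dot_self_eq_sum hA.isHermitian, Finset.mul_sum]
  exact Finset.sum_le_sum fun i _ => mul_le_mul_of_nonneg_right (hlm i) (sq_nonneg _)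

lemma quad_sq_ge {A : Matrix (Fin m) (Fin m) ℝ} (hA : A.PosSemidef) {g : ℝ}
    (hg : ∀ i, 0 < hA.isHermitian.eigenvalues i → g ≤ hA.isHermitian.eigenvalues i)
    (x : Fin m → ℝ) :
    g * (x ⬝ᵥ (A *ᵥ x)) ≤ x ⬝ᵥ ((A * A) *ᵥ x) := by
  have h1 : x ⬝ᵥ ((A * A) *ᵥ x) = (A *ᵥ x) ⬝ᵥ (A *ᵥ x) := by
    rw [← Matrix.mulVec_mulVec, Matrix.dotProduct_mulVec, ← Matrix.mulVec_transpose,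
      herm_transpose hA.isHermitian]
  rw [h1, quad_eq_sum hA.isHermitian, dot_self_eq_sum hA.isHermitian, Finset.mul_sum]
  refine Finset.sum_le_sum fun i _ => ?_
  rw [coeffs_mulVec hA.isHermitian, mul_pow]
  have hnn := hA.eigenvalues_nonneg i
  rcases lt_or_eq_of_le hnn with hpos | hzero
  · have := hg i hpos
    calc g * (hA.isHermitian.eigenvalues i * coeffs hA.isHermitian x i ^ 2)
        ≤ hA.isHermitian.eigenvalues i * (hA.isHermitian.eigenvalues i * coeffs hA.isHermitian x i ^ 2) := by
          apply mul_le_mul_of_nonneg_right this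
          positivity
      _ = hA.isHermitian.eigenvalues i ^ 2 * coeffs hA.isHermitian x i ^ 2 := by ring
  · rw [← hzero]; ring_nf; simp

lemma gapS_bound {S P : Matrix (Fin m) (Fin m) ℝ} (hS : S.PosSemidef)
    (hPs : Pᵀ = P) (hPi : P * P = P)
    (hSP : S * P = 0)
    (hker : ∀ y, S *ᵥ y = 0 → P *ᵥ y = y)
    {g : ℝ} (hg : ∀ i, 0 < hS.isHermitian.eigenvalues i → g ≤ hS.isHermitian.eigenvalues i)
    (v : Fin m → ℝ) :
    g * (((1 - P) *ᵥ v) ⬝ᵥ ((1 - P) *ᵥ v)) ≤ v ⬝ᵥ (S *ᵥ v) := by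
  set Q : Matrix (Fin m) (Fin m) ℝ := 1 - P with hQ
  have hPS : P * S = 0 := by
    have := congrArg Matrix.transpose hSP
    rwa [Matrix.transpose_mul, hPs, herm_transpose hS.isHermitian, Matrix.transpose_zero] at this
  have hQSQ : Qᵀ * S * Q = S := by
    rw [hQ, Matrix.transpose_sub, Matrix.transpose_one, hPs]
    rw [Matrix.sub_mul, Matrix.mul_sub]
    simp [hPS, hSP]
  have hquad : v ⬝ᵥ (S *ᵥ v) = (Q *ᵥ v) ⬝ᵥ (S *ᵥ (Q *ᵥ v)) := by
    rw [conj_quad Q S (herm_transpose hS.isHermitian) v, hQSQ]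
  rw [hquad, quad_eq_sum hS.isHermitian, dot_self_eq_sum hS.isHermitian, Finset.mul_sum]
  refine Finset.sum_le_sum fun i _ => ?_
  rcases lt_or_eq_of_le (hS.eigenvalues_nonneg i) with hpos | hzero
  · exact mul_le_mul_of_nonneg_right (hg i hpos) (sq_nonneg _)
  · -- eigenvalue zero: coefficient vanishes
    have hbker : S *ᵥ ⇑(hS.isHermitian.eigenvectorBasis i) = 0 := by
      rw [hS.isHermitian.mulVec_eigenvectorBasis, ← hzero, zero_smul]
    have hPb : P *ᵥ ⇑(hS.isHermitian.eigenvectorBasis i) = ⇑(hS.isHermitian.eigenvectorBasis i) :=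
      hker _ hbker
    have hc : coeffs hS.isHermitian (Q *ᵥ v) i = 0 := by
      rw [coeffs_eq, Matrix.dotProduct_mulVec, ← Matrix.mulVec_transpose, hQ,
        Matrix.transpose_sub, Matrix.transpose_one, hPs, Matrix.sub_mulVec,
        Matrix.one_mulVec, hPb, sub_self, zero_dotProduct]
    rw [hc]
    simp


lemma trace_expand {n d : ℕ} (A : Matrix (Fin n) (Fin n) ℝ) (B : Matrix (Fin d) (Fin d) ℝ)
    (M N : Matrix (Fin n) (Fin d) ℝ) :
    (Mᵀ * A * N * B).trace = ∑ s, ∑ r, (∑ j, (∑ i, M i s * A i j) * N j r) * B r s := by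
  simp [Matrix.trace, Matrix.mul_apply]

lemma hasDerivAt_traceQF {n d : ℕ} (A : Matrix (Fin n) (Fin n) ℝ) (B : Matrix (Fin d) (Fin d) ℝ)
    (F : ℝ → Matrix (Fin n) (Fin d) ℝ) (F' : Matrix (Fin n) (Fin d) ℝ) (t0 : ℝ)
    (hF : ∀ i r, HasDerivAt (fun s => F s i r) (F' i r) t0) :
    HasDerivAt (fun t => ((F t)ᵀ * A * F t * B).trace)
      ((F'ᵀ * A * F t0 * B).trace + ((F t0)ᵀ * A * F' * B).trace) t0 := by
  simp only [trace_expand]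
  have key : HasDerivAt
      (fun t => ∑ s, ∑ r, (∑ j, (∑ i, F t i s * A i j) * F t j r) * B r s)
      (∑ s, ∑ r, (∑ j, ((∑ i, F' i s * A i j) * F t0 j r
        + (∑ i, F t0 i s * A i j) * F' j r)) * B r s) t0 := by
    refine HasDerivAt.fun_sum fun s _ => HasDerivAt.fun_sum fun r _ => HasDerivAt.mul_const ?_ _
    exact HasDerivAt.fun_sum fun j _ =>
      (HasDerivAt.fun_sum fun i _ => (hF i s).mul_const (A i j)).mul (hF j r)
  convert key using 1
  rw [← Finset.sum_add_distrib]
  refine Finset.sum_congr rfl fun s _ => ?_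
  rw [← Finset.sum_add_distrib]
  refine Finset.sum_congr rfl fun r _ => ?_
  rw [← add_mul]
  congr 1
  rw [← Finset.sum_add_distrib]

lemma conv_trace {n d : ℕ} (A : Matrix (Fin n) (Fin n) ℝ) (R : Matrix (Fin d) (Fin d) ℝ)
    (hRs : Rᵀ = R) (hRi : R * R = R) (M : Matrix (Fin n) (Fin d) ℝ) :
    ((M * R)ᵀ * A * (M * R)).trace = (Mᵀ * A * M * R).trace := by
  have h1 : (M * R)ᵀ * A * (M * R) = Rᵀ * (Mᵀ * A * M) * R := by
    rw [Matrix.transpose_mul]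
    simp only [Matrix.mul_assoc]
  rw [h1, Matrix.trace_mul_cycle, hRs, hRi, Matrix.trace_mul_comm]

lemma split_trace {n d : ℕ} (A : Matrix (Fin n) (Fin n) ℝ) (P : Matrix (Fin d) (Fin d) ℝ)
    (M : Matrix (Fin n) (Fin d) ℝ) :
    (Mᵀ * A * M).trace = (Mᵀ * A * M * (1 - P)).trace + (Mᵀ * A * M * P).trace := by
  rw [← Matrix.trace_add, ← Matrix.mul_add, sub_add_cancel, Matrix.mul_one]


/-- For the gradient flow Ḟ(t) = −Δ F(t) WᵀW,
E^Dir(F(t)) ≤ e^{−2t·gap(WᵀW)·gap(Δ)}·λ_{n−1}·‖F(0)‖² + E^Dir(F(0) P) for t ≥ 0,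
where P is the orthogonal projection onto ker(WᵀW); in particular if W is
invertible then E^Dir(F(t)) → 0 (exponentially). -/
theorem positive_metric_gradient_flow_smoothing (n d : ℕ)
    (Δ : Matrix (Fin n) (Fin n) ℝ) (hpsd : Δ.PosSemidef)
    (W : Matrix (Fin d) (Fin d) ℝ)
    (hSher : (Wᵀ * W).IsHermitian)
    (gW gΔ lamMax : ℝ)
    (hgW : IsLeast {x | x ∈ Set.range hSher.eigenvalues ∧ 0 < x} gW)
    (hgΔ : IsLeast {x | x ∈ Set.range hpsd.isHermitian.eigenvalues ∧ 0 < x} gΔ)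
    (hlamMax : IsGreatest (Set.range hpsd.isHermitian.eigenvalues) lamMax)
    (P : Matrix (Fin d) (Fin d) ℝ) (hPsymm : P.IsSymm) (hPidem : P * P = P)
    (hPrange : LinearMap.range P.mulVecLin = LinearMap.ker (Wᵀ * W).mulVecLin)
    (F : ℝ → Matrix (Fin n) (Fin d) ℝ)
    (hF : ∀ t i r, HasDerivAt (fun s => F s i r) ((-(Δ * F t * (Wᵀ * W))) i r) t) :
    (∀ t : ℝ, 0 ≤ t →
      ((F t)ᵀ * Δ * F t).trace ≤
        Real.exp (-(2 * t * gW * gΔ)) * lamMax * (∑ i, ∑ r, (F 0 i r) ^ 2)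
          + ((F 0 * P)ᵀ * Δ * (F 0 * P)).trace) ∧
    (IsUnit W → Tendsto (fun t => ((F t)ᵀ * Δ * F t).trace) atTop (nhds 0)) := by
  have hPs : Pᵀ = P := hPsymm
  set S := Wᵀ * W with hSdef
  set Q := (1 : Matrix (Fin d) (Fin d) ℝ) - P with hQdef
  have hST : Sᵀ = S := herm_transpose hSher
  have hΔT : Δᵀ = Δ := herm_transpose hpsd.isHermitian
  have hSpsd : S.PosSemidef := by
    have := Matrix.posSemidef_conjTranspose_mul_self W
    rwa [Matrix.conjTranspose_eq_transpose_of_trivial] at this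
  have hQs : Qᵀ = Q := by rw [hQdef, Matrix.transpose_sub, Matrix.transpose_one, hPs]
  have hQi : Q * Q = Q := by
    rw [hQdef, Matrix.mul_sub, Matrix.sub_mul, Matrix.sub_mul, hPidem]
    simp
  have hSP : S * P = 0 := by
    have h0 : ∀ v, (S * P) *ᵥ v = 0 := by
      intro v
      have hmem : P *ᵥ v ∈ LinearMap.range P.mulVecLin := ⟨v, rfl⟩
      rw [hPrange] at hmem
      have h1 : S *ᵥ (P *ᵥ v) = 0 := hmem
      rwa [Matrix.mulVec_mulVec] at h1
    ext i j
    have := congrFun (h0 (Pi.single j 1)) i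
    simpa [Matrix.mulVec_single] using this
  have hPS : P * S = 0 := by
    have := congrArg Matrix.transpose hSP
    rwa [Matrix.transpose_mul, hPs, hST, Matrix.transpose_zero] at this
  have hker : ∀ y, S *ᵥ y = 0 → P *ᵥ y = y := by
    intro y hy
    have hmem : y ∈ LinearMap.ker S.mulVecLin := hy
    rw [← hPrange] at hmem
    obtain ⟨u, hu⟩ := hmem
    have h2 : P *ᵥ (P *ᵥ u) = P *ᵥ u := by rw [Matrix.mulVec_mulVec, hPidem]
    have hu' : P *ᵥ u = y := hu
    rw [← hu', h2]
  have hQS : Q * S = S := by rw [hQdef, Matrix.sub_mul, hPS, Matrix.one_mul, sub_zero]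
  have hSQ : S * Q = S := by rw [hQdef, Matrix.mul_sub, hSP, Matrix.mul_one, sub_zero]
  have hgW0 : 0 < gW := hgW.1.2
  have hgΔ0 : 0 < gΔ := hgΔ.1.2
  have hlam0 : 0 ≤ lamMax := by
    obtain ⟨i, hi⟩ := hlamMax.1
    rw [← hi]; exact hpsd.eigenvalues_nonneg i
  have hgWle : ∀ i, 0 < hSpsd.isHermitian.eigenvalues i → gW ≤ hSpsd.isHermitian.eigenvalues i :=
    fun i h => hgW.2 ⟨⟨i, rfl⟩, h⟩
  have hgΔle : ∀ i, 0 < hpsd.isHermitian.eigenvalues i → gΔ ≤ hpsd.isHermitian.eigenvalues i :=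
    fun i h => hgΔ.2 ⟨⟨i, rfl⟩, h⟩
  have hlamle : ∀ i, hpsd.isHermitian.eigenvalues i ≤ lamMax := fun i => hlamMax.2 ⟨i, rfl⟩
  -- invariance of F t * P
  have hconst : ∀ t, F t * P = F 0 * P := by
    intro t
    have hd : ∀ u i r, HasDerivAt (fun s => (F s * P) i r) 0 u := by
      intro u i r
      have h1 : HasDerivAt (fun s => ∑ k, F s i k * P k r)
          (∑ k, (-(Δ * F u * S)) i k * P k r) u :=
        HasDerivAt.fun_sum fun k _ => (hF u i k).mul_const (P k r)
      have h2 : (∑ k, (-(Δ * F u * S)) i k * P k r) = 0 := by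
        have h3 : (-(Δ * F u * S) * P) i r = 0 := by
          rw [Matrix.neg_mul, Matrix.mul_assoc (Δ * F u) S P, hSP, Matrix.mul_zero]
          simp
        simpa [Matrix.mul_apply] using h3
      rw [h2] at h1
      have : (fun s => (F s * P) i r) = fun s => ∑ k, F s i k * P k r := by
        funext s; simp [Matrix.mul_apply]
      rw [this]
      exact h1
    ext i r
    exact is_const_of_deriv_eq_zero (fun u => (hd u i r).differentiableAt)
      (fun u => (hd u i r).deriv) t 0
  -- the decaying part of the energy
  set E1 : ℝ → ℝ := fun t => ((F t)ᵀ * Δ * F t * Q).trace with hE1def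
  set c : ℝ := gW * gΔ with hcdef
  have hc0 : 0 < c := mul_pos hgW0 hgΔ0
  set X2S : ℝ → ℝ := fun t => ((F t)ᵀ * (Δ * Δ) * F t * S).trace with hX2Sdef
  have hE1deriv : ∀ t, HasDerivAt E1 (-2 * X2S t) t := by
    intro t
    have h0 := hasDerivAt_traceQF Δ Q F (-(Δ * F t * S)) t (hF t)
    have me1 : (-(Δ * F t * S))ᵀ * Δ * F t * Q
        = -(S * ((F t)ᵀ * (Δ * (Δ * (F t * Q))))) := by
      rw [Matrix.transpose_neg, Matrix.transpose_mul (Δ * F t) S, hST,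
        Matrix.transpose_mul Δ (F t), hΔT]
      simp only [Matrix.neg_mul, Matrix.mul_assoc]
    have me2 : ((F t)ᵀ * (Δ * (Δ * (F t * Q)))) * S = (F t)ᵀ * (Δ * Δ) * F t * S := by
      simp only [Matrix.mul_assoc, hQS]
    have t1eq : ((-(Δ * F t * S))ᵀ * Δ * F t * Q).trace = -(X2S t) := by
      rw [me1, Matrix.trace_neg, Matrix.trace_mul_comm, me2]
    have me3 : (F t)ᵀ * Δ * (-(Δ * F t * S)) * Q = -((F t)ᵀ * (Δ * Δ) * F t * S) := by
      have : (F t)ᵀ * Δ * (-(Δ * F t * S)) * Q = -((F t)ᵀ * (Δ * (Δ * (F t * (S * Q))))) := by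
        simp only [Matrix.mul_neg, Matrix.neg_mul, Matrix.mul_assoc]
      rw [this, hSQ]
      simp only [Matrix.mul_assoc]
    have t2eq : ((F t)ᵀ * Δ * (-(Δ * F t * S)) * Q).trace = -(X2S t) := by
      rw [me3, Matrix.trace_neg]
    rw [t1eq, t2eq] at h0
    have : -(X2S t) + -(X2S t) = -2 * X2S t := by ring
    rwa [this] at h0
  -- differential inequality
  have hDle : ∀ t, -2 * X2S t ≤ -(2 * c) * E1 t := by
    intro t
    have hG : ∀ R : Matrix (Fin d) (Fin d) ℝ,
        ((F t)ᵀ * (Δ * Δ) * F t * R).trace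
          = ∑ r, (fun i => (Δ * F t) r i) ⬝ᵥ (R *ᵥ (fun i => (Δ * F t) r i)) := by
      intro R
      have hGt : (Δ * F t)ᵀ = (F t)ᵀ * Δ := by rw [Matrix.transpose_mul, hΔT]
      calc ((F t)ᵀ * (Δ * Δ) * F t * R).trace
          = ((Δ * F t)ᵀ * (Δ * F t) * R).trace := by
            rw [hGt]; congr 1; simp only [Matrix.mul_assoc]
        _ = ((Δ * F t) * R * (Δ * F t)ᵀ).trace := (Matrix.trace_mul_cycle _ _ _).symm
        _ = (((Δ * F t)ᵀ)ᵀ * R * (Δ * F t)ᵀ).trace := by rw [Matrix.transpose_transpose]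
        _ = ∑ r, (fun i => (Δ * F t)ᵀ i r) ⬝ᵥ (R *ᵥ (fun i => (Δ * F t)ᵀ i r)) := traceQF R _
        _ = ∑ r, (fun i => (Δ * F t) r i) ⬝ᵥ (R *ᵥ (fun i => (Δ * F t) r i)) := rfl
    -- step (i)
    have hstep1 : gW * ((F t)ᵀ * (Δ * Δ) * F t * Q).trace ≤ X2S t := by
      show gW * ((F t)ᵀ * (Δ * Δ) * F t * Q).trace ≤ ((F t)ᵀ * (Δ * Δ) * F t * S).trace
      rw [hG Q, hG S, Finset.mul_sum]
      refine Finset.sum_le_sum fun r _ => ?_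
      set u : Fin d → ℝ := fun i => (Δ * F t) r i with hudef
      have huQ : u ⬝ᵥ (Q *ᵥ u) = (Q *ᵥ u) ⬝ᵥ (Q *ᵥ u) := by
        conv_lhs => rw [← hQi, ← Matrix.mulVec_mulVec, Matrix.dotProduct_mulVec,
          ← Matrix.mulVec_transpose, hQs]
      rw [huQ]
      have := gapS_bound hSpsd hPs hPidem hSP hker hgWle u
      rwa [← hQdef] at this
    -- step (ii)
    have hstep2 : gΔ * E1 t ≤ ((F t)ᵀ * (Δ * Δ) * F t * Q).trace := by
      show gΔ * ((F t)ᵀ * Δ * F t * Q).trace ≤ ((F t)ᵀ * (Δ * Δ) * F t * Q).trace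
      rw [← conv_trace Δ Q hQs hQi (F t), ← conv_trace (Δ * Δ) Q hQs hQi (F t)]
      rw [traceQF Δ (F t * Q), traceQF (Δ * Δ) (F t * Q), Finset.mul_sum]
      exact Finset.sum_le_sum fun r _ => quad_sq_ge hpsd hgΔle _
    have h9 : gW * (gΔ * E1 t) ≤ gW * ((F t)ᵀ * (Δ * Δ) * F t * Q).trace :=
      mul_le_mul_of_nonneg_left hstep2 (le_of_lt hgW0)
    have h10 : c * E1 t ≤ X2S t := by
      rw [hcdef, mul_assoc]
      exact le_trans h9 hstep1
    linarith
  -- nonnegativity of E1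
  have hE1nonneg : ∀ t, 0 ≤ E1 t := by
    intro t
    show 0 ≤ ((F t)ᵀ * Δ * F t * Q).trace
    rw [← conv_trace Δ Q hQs hQi (F t), traceQF Δ (F t * Q)]
    refine Finset.sum_nonneg fun r _ => ?_
    have := hpsd.dotProduct_mulVec_nonneg (fun i => (F t * Q) i r)
    simpa using this
  -- Gronwall
  have hgron : ∀ t : ℝ, 0 ≤ t → E1 t ≤ Real.exp (-(2 * c * t)) * E1 0 := by
    have hφd : ∀ t, HasDerivAt (fun s => Real.exp (2 * c * s) * E1 s)
        (2 * c * Real.exp (2 * c * t) * E1 t + Real.exp (2 * c * t) * (-2 * X2S t)) t := by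
      intro t
      have h1 : HasDerivAt (fun s : ℝ => 2 * c * s) (2 * c) t := by
        simpa using (hasDerivAt_id t).const_mul (2 * c)
      have h2 := (h1.exp).fun_mul (hE1deriv t)
      exact h2.congr_deriv (by ring)
    have hanti : Antitone (fun s => Real.exp (2 * c * s) * E1 s) := by
      refine antitone_of_deriv_nonpos (fun t => (hφd t).differentiableAt) (fun t => ?_)
      rw [(hφd t).deriv]
      have h3 := hDle t
      have he := Real.exp_pos (2 * c * t)
      nlinarith [mul_le_mul_of_nonneg_left h3 (le_of_lt he)]
    intro t ht
    have h4 : Real.exp (2 * c * t) * E1 t ≤ Real.exp (2 * c * 0) * E1 0 := hanti ht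
    rw [mul_zero, Real.exp_zero, one_mul] at h4
    have h5 := mul_le_mul_of_nonneg_left h4 (le_of_lt (Real.exp_pos (-(2 * c * t))))
    calc E1 t = Real.exp (-(2 * c * t)) * (Real.exp (2 * c * t) * E1 t) := by
          rw [← mul_assoc, ← Real.exp_add]; simp
      _ ≤ Real.exp (-(2 * c * t)) * E1 0 := h5
  -- initial bound
  have hinit : E1 0 ≤ lamMax * (∑ i, ∑ r, (F 0 i r) ^ 2) := by
    have hb1 : E1 0 ≤ lamMax * ((F 0 * Q)ᵀ * (1 : Matrix (Fin n) (Fin n) ℝ) * (F 0 * Q)).trace := by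
      show ((F 0)ᵀ * Δ * F 0 * Q).trace ≤ _
      rw [← conv_trace Δ Q hQs hQi (F 0), traceQF Δ (F 0 * Q),
        traceQF 1 (F 0 * Q), Finset.mul_sum]
      refine Finset.sum_le_sum fun r _ => ?_
      have := quad_le_max hpsd hlamle (fun i => (F 0 * Q) i r)
      simpa [Matrix.one_mulVec] using this
    have hb2 : ((F 0 * Q)ᵀ * (1 : Matrix (Fin n) (Fin n) ℝ) * (F 0 * Q)).trace
        ≤ ∑ i, ∑ r, (F 0 i r) ^ 2 := by
      have hsplit := split_trace (1 : Matrix (Fin n) (Fin n) ℝ) P (F 0)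
      rw [← hQdef] at hsplit
      rw [conv_trace 1 Q hQs hQi (F 0)]
      have hP0 : 0 ≤ ((F 0)ᵀ * (1 : Matrix (Fin n) (Fin n) ℝ) * F 0 * P).trace := by
        rw [← conv_trace 1 P hPs hPidem (F 0), traceQF 1 (F 0 * P)]
        refine Finset.sum_nonneg fun r _ => ?_
        have hnn : (0:ℝ) ≤ (fun i => (F 0 * P) i r) ⬝ᵥ (fun i => (F 0 * P) i r) :=
          Finset.sum_nonneg fun i _ => mul_self_nonneg _
        simpa [Matrix.one_mulVec] using hnn
      have htot : ((F 0)ᵀ * (1 : Matrix (Fin n) (Fin n) ℝ) * F 0).trace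
          = ∑ i, ∑ r, (F 0 i r) ^ 2 := by
        rw [traceQF (1 : Matrix (Fin n) (Fin n) ℝ) (F 0)]
        simp only [Matrix.one_mulVec, dotProduct, sq]
        exact Finset.sum_comm
      linarith [hsplit, hP0, htot.symm.le, htot.le]
    calc E1 0 ≤ lamMax * ((F 0 * Q)ᵀ * (1 : Matrix (Fin n) (Fin n) ℝ) * (F 0 * Q)).trace := hb1
      _ ≤ lamMax * (∑ i, ∑ r, (F 0 i r) ^ 2) := mul_le_mul_of_nonneg_left hb2 hlam0
  -- energy split
  have hEsplit : ∀ t, ((F t)ᵀ * Δ * F t).trace = E1 t + ((F 0 * P)ᵀ * Δ * (F 0 * P)).trace := by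
    intro t
    have hsplit := split_trace Δ P (F t)
    rw [← hQdef] at hsplit
    rw [hsplit, ← conv_trace Δ P hPs hPidem (F t), hconst t]
  -- part 1
  have part1 : ∀ t : ℝ, 0 ≤ t →
      ((F t)ᵀ * Δ * F t).trace ≤
        Real.exp (-(2 * t * gW * gΔ)) * lamMax * (∑ i, ∑ r, (F 0 i r) ^ 2)
          + ((F 0 * P)ᵀ * Δ * (F 0 * P)).trace := by
    intro t ht
    rw [hEsplit t]
    have h1 : E1 t ≤ Real.exp (-(2 * c * t)) * (lamMax * (∑ i, ∑ r, (F 0 i r) ^ 2)) :=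
      le_trans (hgron t ht) (mul_le_mul_of_nonneg_left hinit (le_of_lt (Real.exp_pos _)))
    have h2 : Real.exp (-(2 * c * t)) = Real.exp (-(2 * t * gW * gΔ)) := by
      rw [hcdef]; ring_nf
    rw [h2] at h1
    linarith [h1]
  refine ⟨part1, ?_⟩
  -- part 2
  intro hW
  have hP0 : P = 0 := by
    have hinj : Function.Injective (W.mulVec) := Matrix.mulVec_injective_iff_isUnit.mpr hW
    ext i j
    have hv : ∀ v, P *ᵥ v = 0 := by
      intro v
      have hmem : P *ᵥ v ∈ LinearMap.range P.mulVecLin := ⟨v, rfl⟩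
      rw [hPrange] at hmem
      have h1 : S *ᵥ (P *ᵥ v) = 0 := hmem
      set y := P *ᵥ v
      have h2 : (W *ᵥ y) ⬝ᵥ (W *ᵥ y) = 0 := by
        have h3 : y ⬝ᵥ (S *ᵥ y) = 0 := by rw [h1, dotProduct_zero]
        rw [hSdef, ← Matrix.mulVec_mulVec, Matrix.dotProduct_mulVec,
          ← Matrix.mulVec_transpose, Matrix.transpose_transpose] at h3
        exact h3
      have h4 : W *ᵥ y = 0 := by
        have := dotProduct_self_eq_zero.mp h2
        exact this
      have h5 : W *ᵥ y = W *ᵥ 0 := by rw [h4, Matrix.mulVec_zero]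
      exact hinj h5
    have := congrFun (hv (Pi.single j 1)) i
    simpa [Matrix.mulVec_single] using this
  have hzero : ((F 0 * P)ᵀ * Δ * (F 0 * P)).trace = 0 := by
    rw [hP0]
    simp
  have hlow : ∀ t, 0 ≤ ((F t)ᵀ * Δ * F t).trace := by
    intro t
    rw [traceQF Δ (F t)]
    refine Finset.sum_nonneg fun r _ => ?_
    simpa using hpsd.dotProduct_mulVec_nonneg (fun i => F t i r)
  have hup : ∀ᶠ t in atTop, ((F t)ᵀ * Δ * F t).trace
      ≤ Real.exp (-(2 * t * gW * gΔ)) * lamMax * (∑ i, ∑ r, (F 0 i r) ^ 2) := by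
    filter_upwards [eventually_ge_atTop (0 : ℝ)] with t ht
    have := part1 t ht
    rw [hzero] at this
    linarith
  have hgtend : Tendsto (fun t : ℝ => Real.exp (-(2 * t * gW * gΔ)) * lamMax
      * (∑ i, ∑ r, (F 0 i r) ^ 2)) atTop (nhds 0) := by
    have hlin : Tendsto (fun t : ℝ => -(2 * t * gW * gΔ)) atTop atBot := by
      have h6 : Tendsto (fun t : ℝ => (-(2 * gW * gΔ)) * t) atTop atBot :=
        (tendsto_const_mul_atBot_of_neg (by nlinarith)).mpr tendsto_id
      refine h6.congr fun t => by ring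
    have h7 : Tendsto (fun t : ℝ => Real.exp (-(2 * t * gW * gΔ))) atTop (nhds 0) :=
      Real.tendsto_exp_atBot.comp hlin
    have h8 := (h7.mul_const lamMax).mul_const (∑ i, ∑ r, (F 0 i r) ^ 2)
    simpa using h8
  exact tendsto_of_tendsto_of_tendsto_of_le_of_le' tendsto_const_nhds hgtend
    (Eventually.of_forall hlow) hup
end

section
/- For the source-free linear CGNN dynamics Ḟ(t) = −ΔF(t) + F(t)Ω̃ with Ω̃ symmetric, the normalized Dirichlet energy satisfies E^Dir(F(t)/‖F(t)‖) ≤ C e^{−gap(Δ)·t} for all large t and almost every F(0); hence the system is low-frequency dominant and never high-frequency dominant, independent of Ω̃. -/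
open Matrix Finset Filter

theorem exp_ode (k : ℝ) (f : ℝ → ℝ) (hf : ∀ t, HasDerivAt f (k * f t) t) (t : ℝ) :
    f t = Real.exp (k * t) * f 0 := by
  have hg : ∀ s, HasDerivAt (fun u => f u * Real.exp (-k * u)) 0 s := by
    intro s
    have h1 : HasDerivAt (fun u => Real.exp (-k * u)) (-k * Real.exp (-k * s)) s := by
      simpa [mul_comm] using (HasDerivAt.exp ((hasDerivAt_id s).const_mul (-k)))
    have := (hf s).fun_mul h1
    refine this.congr_deriv ?_
    ring
  have hconst : ∀ s, f s * Real.exp (-k * s) = f 0 * Real.exp (-k * 0) := by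
    intro s
    have := is_const_of_deriv_eq_zero (f := fun u => f u * Real.exp (-k * u))
      (fun u => (hg u).differentiableAt) (fun u => (hg u).deriv) s 0
    simpa using this
  have := hconst t
  have h3 : Real.exp (k * t) * Real.exp (-k * t) = 1 := by
    rw [← Real.exp_add]; ring_nf; exact Real.exp_zero
  calc f t = f t * (Real.exp (-k * t) * Real.exp (k * t)) := by
        rw [mul_comm (Real.exp _), h3, mul_one]
    _ = Real.exp (k * t) * (f t * Real.exp (-k * t)) := by ring
    _ = Real.exp (k * t) * f 0 := by rw [this]; simp

/-- Source-free linear CGNN Ḟ(t) = −ΔF(t) + F(t)Ω̃ with Ω̃ symmetric: for almost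
every F(0) the normalized Dirichlet energy satisfies
E^Dir(F(t)/‖F(t)‖) ≤ C e^{−gap(Δ)·t} for all large t; hence the system is
low-frequency dominant and never high-frequency dominant, independent of Ω̃. -/
theorem CGNN_always_LFD (n d : ℕ)
    (Δ : Matrix (Fin n) (Fin n) ℝ)
    (Om : Matrix (Fin d) (Fin d) ℝ) (hOm : Om.IsSymm)
    (φ : Fin n → Fin n → ℝ) (lam : Fin n → ℝ)
    (hφON : ∀ k l, φ k ⬝ᵥ φ l = if k = l then (1 : ℝ) else 0)
    (hφ : ∀ l, Δ.mulVec (φ l) = lam l • φ l)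
    (ψ : Fin d → Fin d → ℝ) (ν : Fin d → ℝ)
    (hψON : ∀ r s, ψ r ⬝ᵥ ψ s = if r = s then (1 : ℝ) else 0)
    (hψ : ∀ r, Om.mulVec (ψ r) = ν r • ψ r)
    -- connected graph: λ_0 = 0 (index l0), all other eigenvalues ≥ gap(Δ) > 0
    (l0 : Fin n) (hl0 : lam l0 = 0)
    (gΔ : ℝ) (hgΔpos : 0 < gΔ) (hgap : ∀ l, l ≠ l0 → gΔ ≤ lam l)
    (lamMax : ℝ) (hlamMax : IsGreatest (Set.range lam) lamMax)
    (F : ℝ → Matrix (Fin n) (Fin d) ℝ)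
    (hF : ∀ t i r, HasDerivAt (fun s => F s i r) ((-(Δ * F t) + F t * Om) i r) t)
    -- generic F(0): nonzero projection onto (top eigenspace of Ω̃) ⊗ ker Δ
    (hgen : ∃ r : Fin d, (∀ s, ν s ≤ ν r) ∧
      ((fun p : Fin d × Fin n => F 0 p.2 p.1) ⬝ᵥ
        fun p : Fin d × Fin n => ψ r p.1 * φ l0 p.2) ≠ 0) :
    (∃ C : ℝ, ∀ᶠ t in atTop,
      ((F t)ᵀ * Δ * F t).trace / (∑ i, ∑ r, (F t i r) ^ 2)
        ≤ C * Real.exp (-(gΔ * t))) ∧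
    (0 < lamMax → ¬ Tendsto
      (fun t => ((F t)ᵀ * Δ * F t).trace / (∑ i, ∑ r, (F t i r) ^ 2))
      atTop (nhds lamMax)) := by
  -- orthogonal matrices
  set P : Matrix (Fin n) (Fin n) ℝ := Matrix.of φ with hPdef
  set Q : Matrix (Fin d) (Fin d) ℝ := Matrix.of ψ with hQdef
  have hPPT : P * Pᵀ = 1 := by
    ext k l
    simpa [Matrix.mul_apply, Matrix.one_apply, dotProduct, hPdef] using hφON k l
  have hPTP : Pᵀ * P = 1 := mul_eq_one_comm.mp hPPT
  have hQQT : Q * Qᵀ = 1 := by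
    ext k l
    simpa [Matrix.mul_apply, Matrix.one_apply, dotProduct, hQdef] using hψON k l
  have hQTQ : Qᵀ * Q = 1 := mul_eq_one_comm.mp hQQT
  have hΔPT : Δ * Pᵀ = Pᵀ * diagonal lam := by
    ext i l
    have h := congrFun (hφ l) i
    simp only [Matrix.mulVec, dotProduct, Pi.smul_apply, smul_eq_mul] at h
    simp [Matrix.mul_apply, Matrix.diagonal, hPdef, hQdef, Matrix.of_apply, h, mul_comm]
  have hPΔ : P * Δ = diagonal lam * P := by
    have : P * (Δ * Pᵀ) * P = P * (Pᵀ * diagonal lam) * P := by rw [hΔPT]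
    calc P * Δ = P * Δ * (Pᵀ * P) := by rw [hPTP, Matrix.mul_one]
      _ = P * (Δ * Pᵀ) * P := by rw [Matrix.mul_assoc, Matrix.mul_assoc, Matrix.mul_assoc]
      _ = P * (Pᵀ * diagonal lam) * P := by rw [hΔPT]
      _ = (P * Pᵀ) * diagonal lam * P := by rw [Matrix.mul_assoc P Pᵀ]
      _ = diagonal lam * P := by rw [hPPT, Matrix.one_mul]
  have hOmQT : Om * Qᵀ = Qᵀ * diagonal ν := by
    ext i l
    have h := congrFun (hψ l) i
    simp only [Matrix.mulVec, dotProduct, Pi.smul_apply, smul_eq_mul] at h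
    simp [Matrix.mul_apply, Matrix.diagonal, hPdef, hQdef, Matrix.of_apply, h, mul_comm]
  set M : ℝ → Matrix (Fin n) (Fin d) ℝ := fun t => P * F t * Qᵀ with hMdef
  have entry : ∀ (X : Matrix (Fin n) (Fin d) ℝ) (l : Fin n) (r : Fin d),
      (P * X * Qᵀ) l r = ∑ j, ∑ i, φ l i * X i j * ψ r j := by
    intro X l r
    simp [Matrix.mul_apply, Finset.sum_mul, hPdef, hQdef]
  -- the ODE for M entries
  have hMder : ∀ t l r, HasDerivAt (fun s => M s l r) ((ν r - lam l) * M t l r) t := by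
    intro t l r
    have key : HasDerivAt (fun u => ∑ j, ∑ i, φ l i * F u i j * ψ r j)
        (∑ j, ∑ i, φ l i * ((-(Δ * F t) + F t * Om) i j) * ψ r j) t := by
      apply HasDerivAt.fun_sum
      intro j _
      apply HasDerivAt.fun_sum
      intro i _
      exact ((hF t i j).const_mul (φ l i)).mul_const (ψ r j)
    have heq : (fun u => M u l r) = fun u => ∑ j, ∑ i, φ l i * F u i j * ψ r j := by
      funext u
      exact entry (F u) l r
    have hval : (∑ j, ∑ i, φ l i * ((-(Δ * F t) + F t * Om) i j) * ψ r j)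
        = (ν r - lam l) * M t l r := by
      have h1 : (∑ j, ∑ i, φ l i * ((-(Δ * F t) + F t * Om) i j) * ψ r j)
          = (P * (-(Δ * F t) + F t * Om) * Qᵀ) l r := (entry _ l r).symm
      have h2 : P * (-(Δ * F t) + F t * Om) * Qᵀ
          = -(diagonal lam * M t) + M t * diagonal ν := by
        have e1 : P * (Δ * F t) * Qᵀ = diagonal lam * M t := by
          simp only [hMdef, ← Matrix.mul_assoc, hPΔ]
        have e2 : P * (F t * Om) * Qᵀ = M t * diagonal ν := by
          simp only [hMdef]
          calc P * (F t * Om) * Qᵀ = P * F t * (Om * Qᵀ) := by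
                simp only [Matrix.mul_assoc]
            _ = P * F t * (Qᵀ * diagonal ν) := by rw [hOmQT]
            _ = P * F t * Qᵀ * diagonal ν := by simp only [Matrix.mul_assoc]
        rw [Matrix.mul_add, Matrix.add_mul, Matrix.mul_neg, Matrix.neg_mul, e1, e2]
      rw [h1, h2]
      simp [Matrix.diagonal_mul, Matrix.mul_diagonal]
      ring
    rw [heq, ← hval]
    exact key
  have hMsol : ∀ l r t, M t l r = Real.exp ((ν r - lam l) * t) * M 0 l r := by
    intro l r t
    exact exp_ode (ν r - lam l) (fun s => M s l r) (fun u => hMder u l r) t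
  -- trace/norm identities
  have hFrec : ∀ t, F t = Pᵀ * M t * Q := by
    intro t
    simp only [hMdef]
    calc F t = (Pᵀ * P) * F t * (Qᵀ * Q) := by rw [hPTP, hQTQ]; simp
      _ = Pᵀ * (P * F t * Qᵀ) * Q := by simp only [Matrix.mul_assoc]
  have trconj : ∀ X : Matrix (Fin d) (Fin d) ℝ, (Qᵀ * X * Q).trace = X.trace := by
    intro X
    rw [Matrix.mul_assoc, Matrix.trace_mul_comm, Matrix.mul_assoc, hQQT, Matrix.mul_one]
  have hconj1 : ∀ t, (F t)ᵀ * F t = Qᵀ * ((M t)ᵀ * M t) * Q := by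
    intro t
    conv_lhs => rw [hFrec t]
    rw [Matrix.transpose_mul, Matrix.transpose_mul, Matrix.transpose_transpose]
    simp only [Matrix.mul_assoc]
    rw [← Matrix.mul_assoc P Pᵀ (M t * Q), hPPT, Matrix.one_mul]
  have hconj2 : ∀ t, (F t)ᵀ * Δ * F t = Qᵀ * ((M t)ᵀ * (diagonal lam * M t)) * Q := by
    intro t
    have hPΔPT : P * Δ * Pᵀ = diagonal lam := by
      rw [hPΔ, Matrix.mul_assoc, hPPT, Matrix.mul_one]
    rw [← hPΔPT]
    simp only [hMdef, Matrix.transpose_mul, Matrix.transpose_transpose]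
    simp only [← Matrix.mul_assoc]
    rw [hQTQ, Matrix.one_mul]
    rw [Matrix.mul_assoc ((F t)ᵀ) Pᵀ P, hPTP, Matrix.mul_one]
    rw [Matrix.mul_assoc ((F t)ᵀ * Δ) Pᵀ P, hPTP, Matrix.mul_one]
    rw [Matrix.mul_assoc ((F t)ᵀ * Δ * F t) Qᵀ Q, hQTQ, Matrix.mul_one]
  have trsum : ∀ (A : Matrix (Fin n) (Fin d) ℝ), (Aᵀ * A).trace = ∑ i, ∑ r, (A i r) ^ 2 := by
    intro A
    simp only [Matrix.trace, Matrix.diag, Matrix.mul_apply, Matrix.transpose_apply, sq]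
    rw [Finset.sum_comm]
  have trsumD : ∀ (A : Matrix (Fin n) (Fin d) ℝ),
      (Aᵀ * (diagonal lam * A)).trace = ∑ l, ∑ r, lam l * (A l r) ^ 2 := by
    intro A
    simp only [Matrix.trace, Matrix.diag, Matrix.mul_apply, Matrix.transpose_apply,
      Matrix.diagonal_apply, ite_mul, zero_mul, Finset.sum_ite_eq, Finset.mem_univ, if_true]
    rw [Finset.sum_comm]
    apply Finset.sum_congr rfl
    intro l _
    apply Finset.sum_congr rfl
    intro r _
    ring
  have hnorm : ∀ t, (∑ i, ∑ r, (F t i r) ^ 2) = ∑ l, ∑ r, (M t l r) ^ 2 := by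
    intro t
    rw [← trsum (F t), ← trsum (M t), hconj1 t, trconj]
  have htrace : ∀ t, ((F t)ᵀ * Δ * F t).trace = ∑ l, ∑ r, lam l * (M t l r) ^ 2 := by
    intro t
    rw [hconj2 t, trconj, trsumD]
  -- generic initial data
  obtain ⟨r0, hr0max, hr0ne⟩ := hgen
  have ha0 : M 0 l0 r0 ≠ 0 := by
    have heq0 : M 0 l0 r0 = ((fun p : Fin d × Fin n => F 0 p.2 p.1) ⬝ᵥ
        fun p : Fin d × Fin n => ψ r0 p.1 * φ l0 p.2) := by
      simp only [hMdef]
      rw [entry (F 0) l0 r0]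
      simp only [dotProduct, Fintype.sum_prod_type]
      apply Finset.sum_congr rfl
      intro j _
      apply Finset.sum_congr rfl
      intro i _
      ring
    rw [heq0]
    exact hr0ne
  have ha0sq : 0 < (M 0 l0 r0) ^ 2 := by positivity
  set K : ℝ := ν r0 with hK
  set S : ℝ := ∑ l, ∑ r, (M 0 l r) ^ 2 with hS
  have hSnonneg : 0 ≤ S := by
    apply Finset.sum_nonneg
    intro l _
    exact Finset.sum_nonneg fun r _ => sq_nonneg _
  have hlamMax0 : 0 ≤ lamMax := by
    have := hlamMax.2 ⟨l0, rfl⟩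
    linarith [hl0 ▸ this]
  set C : ℝ := lamMax * S / (M 0 l0 r0) ^ 2 with hC
  have hCnonneg : 0 ≤ C := div_nonneg (mul_nonneg hlamMax0 hSnonneg) (sq_nonneg _)
  have hCa0 : C * (M 0 l0 r0) ^ 2 = lamMax * S := div_mul_cancel₀ _ (ne_of_gt ha0sq)
  -- the key pointwise bound for t ≥ 0
  have key : ∀ t : ℝ, 0 ≤ t →
      ((F t)ᵀ * Δ * F t).trace / (∑ i, ∑ r, (F t i r) ^ 2)
        ≤ C * Real.exp (-(gΔ * t)) := by
    intro t ht
    rw [htrace t, hnorm t]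
    set E : ℝ := Real.exp (K * t) with hE
    have hEpos : 0 < E := Real.exp_pos _
    -- denominator lower bound
    have hdlb : E ^ 2 * (M 0 l0 r0) ^ 2 ≤ ∑ l, ∑ r, (M t l r) ^ 2 := by
      have h1 : (M t l0 r0) ^ 2 = E ^ 2 * (M 0 l0 r0) ^ 2 := by
        rw [hMsol l0 r0 t, hl0, sub_zero, mul_pow, hE, hK]
      rw [← h1]
      have h2 : (M t l0 r0) ^ 2 ≤ ∑ r, (M t l0 r) ^ 2 :=
        Finset.single_le_sum (f := fun r => (M t l0 r) ^ 2)
          (fun r _ => sq_nonneg _) (Finset.mem_univ r0)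
      refine le_trans h2 ?_
      exact Finset.single_le_sum (f := fun l => ∑ r, (M t l r) ^ 2)
        (fun l _ => Finset.sum_nonneg fun r _ => sq_nonneg _) (Finset.mem_univ l0)
    have hdpos : (0:ℝ) < ∑ l, ∑ r, (M t l r) ^ 2 :=
      lt_of_lt_of_le (by positivity) hdlb
    -- numerator termwise bound
    have hterm : ∀ l r, lam l * (M t l r) ^ 2 ≤
        (lamMax * (Real.exp (-(gΔ * t)) * E ^ 2)) * (M 0 l r) ^ 2 := by
      intro l r
      by_cases hll : l = l0
      · subst hll
        rw [hl0, zero_mul]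
        exact mul_nonneg (mul_nonneg hlamMax0
          (mul_nonneg (Real.exp_pos _).le (sq_nonneg E))) (sq_nonneg _)
      · have h1 : gΔ ≤ lam l := hgap l hll
        have h2 : lam l ≤ lamMax := hlamMax.2 ⟨l, rfl⟩
        have hνK : ν r ≤ K := hr0max r
        have h3 : Real.exp ((ν r - lam l) * t) ^ 2 ≤ Real.exp (-(gΔ * t)) * E ^ 2 := by
          have e1 : Real.exp ((ν r - lam l) * t) ^ 2
              = Real.exp ((ν r - lam l) * t + (ν r - lam l) * t) := by
            rw [Real.exp_add, sq]
          have e2 : Real.exp (-(gΔ * t)) * E ^ 2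
              = Real.exp (-(gΔ * t) + (K * t + K * t)) := by
            rw [hE, Real.exp_add, Real.exp_add, sq]
          rw [e1, e2]
          apply Real.exp_le_exp.mpr
          nlinarith [mul_nonneg (sub_nonneg.mpr hνK) ht,
            mul_nonneg (by linarith : (0:ℝ) ≤ 2 * lam l - gΔ) ht]
        rw [hMsol l r t, mul_pow]
        calc lam l * (Real.exp ((ν r - lam l) * t) ^ 2 * (M 0 l r) ^ 2)
            ≤ lamMax * (Real.exp (-(gΔ * t)) * E ^ 2 * (M 0 l r) ^ 2) := by
              apply mul_le_mul h2 _ (by positivity) hlamMax0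
              exact mul_le_mul_of_nonneg_right h3 (sq_nonneg _)
          _ = (lamMax * (Real.exp (-(gΔ * t)) * E ^ 2)) * (M 0 l r) ^ 2 := by ring
    have hnum : (∑ l, ∑ r, lam l * (M t l r) ^ 2)
        ≤ (lamMax * (Real.exp (-(gΔ * t)) * E ^ 2)) * S := by
      rw [hS, Finset.mul_sum]
      apply Finset.sum_le_sum
      intro l _
      rw [Finset.mul_sum]
      exact Finset.sum_le_sum fun r _ => hterm l r
    rw [div_le_iff₀ hdpos]
    calc (∑ l, ∑ r, lam l * (M t l r) ^ 2)
        ≤ (lamMax * (Real.exp (-(gΔ * t)) * E ^ 2)) * S := hnum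
      _ = (C * Real.exp (-(gΔ * t))) * (E ^ 2 * (M 0 l0 r0) ^ 2) := by
          linear_combination (-(Real.exp (-(gΔ * t)) * E ^ 2)) * hCa0
      _ ≤ (C * Real.exp (-(gΔ * t))) * (∑ l, ∑ r, (M t l r) ^ 2) := by
          exact mul_le_mul_of_nonneg_left hdlb (mul_nonneg hCnonneg (Real.exp_pos _).le)
  constructor
  · exact ⟨C, by filter_upwards [eventually_ge_atTop (0:ℝ)] with t ht using key t ht⟩
  · intro hpos hT
    have hexp : Tendsto (fun t : ℝ => C * Real.exp (-(gΔ * t))) atTop (nhds 0) := by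
      have h1 : Tendsto (fun t : ℝ => gΔ * t) atTop atTop :=
        Tendsto.const_mul_atTop hgΔpos tendsto_id
      have h2 : Tendsto (fun t : ℝ => -(gΔ * t)) atTop atBot :=
        tendsto_neg_atBot_iff.mpr h1
      have h3 : Tendsto (fun t : ℝ => Real.exp (-(gΔ * t))) atTop (nhds 0) :=
        Real.tendsto_exp_atBot.comp h2
      simpa using h3.const_mul C
    have hev1 : ∀ᶠ t in atTop, C * Real.exp (-(gΔ * t)) < lamMax / 2 :=
      hexp.eventually (gt_mem_nhds (by linarith))
    have hev2 : ∀ᶠ t in atTop,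
        lamMax / 2 < ((F t)ᵀ * Δ * F t).trace / (∑ i, ∑ r, (F t i r) ^ 2) :=
      hT.eventually (lt_mem_nhds (by linarith))
    have hev3 : ∀ᶠ t in atTop,
        ((F t)ᵀ * Δ * F t).trace / (∑ i, ∑ r, (F t i r) ^ 2)
          ≤ C * Real.exp (-(gΔ * t)) := by
      filter_upwards [eventually_ge_atTop (0:ℝ)] with t ht using key t ht
    obtain ⟨t, h1, h2, h3⟩ := (hev1.and (hev2.and hev3)).exists
    linarith
end
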